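/- arXiv:1312.1826 — 8 statements merged into one kernel-verified Lean document; each statement's English description precedes it below -/
import Mathlib

section
/- Let $M_{n,\ell}$ (for $\ell \le n$) be the 0/1 matrix whose rows are indexed by subsets $S \subseteq [n]$ with $|S| \ge \ell$ and whose columns are indexed by all subsets $T \subseteq [n]$, with entry $M_{n,\ell}(S,T) = 1$ if $T \subseteq S$ and $0$ otherwise. Then over any field $\mathbb{F}$, every nonzero $\mathbb{F}$-linear combination of the rows of $M_{n,\ell}$ has at least $2^{\ell}$ nonzero entries. -/
lemma my_sum_pow {F : Type*} [Field F] {α : Type*} [DecidableEq α] (x : Finset α) :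
    (∑ m ∈ x.powerset, (-1 : F) ^ m.card) = if x = ∅ then 1 else 0 := by
  have := Finset.sum_powerset_neg_one_pow_card (x := x)
  have h2 : ((∑ m ∈ x.powerset, (-1 : ℤ) ^ m.card : ℤ) : F)
      = ∑ m ∈ x.powerset, (-1 : F) ^ m.card := by push_cast; rfl
  rw [← h2, this]
  split <;> simp

open scoped Classical in
/-- Any nonzero linear combination of the rows of the subset-containment matrix
`M_{n,ℓ}` (rows: subsets of `[n]` of size ≥ ℓ, columns: all subsets of `[n]`,
entry 1 iff the column-set is contained in the row-set) has at least `2^ℓ`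
nonzero entries. -/
theorem stmt0 {F : Type*} [Field F] (n ℓ : ℕ) (hℓ : ℓ ≤ n)
    (M : {S : Finset (Fin n) // ℓ ≤ S.card} → Finset (Fin n) → F)
    (hM : ∀ S T, M S T = if T ⊆ S.1 then 1 else 0)
    (c : {S : Finset (Fin n) // ℓ ≤ S.card} → F) (hc : c ≠ 0) :
    2 ^ ℓ ≤ (Finset.univ.filter
      (fun T : Finset (Fin n) => (∑ S, c S * M S T) ≠ 0)).card := by
  classical
  set v : Finset (Fin n) → F := fun T => ∑ S, c S * M S T with hv
  -- the support of c is nonempty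
  have hsupp : (Finset.univ.filter
      (fun S : {S : Finset (Fin n) // ℓ ≤ S.card} => c S ≠ 0)).Nonempty := by
    rcases Function.ne_iff.mp hc with ⟨S, hS⟩
    exact ⟨S, Finset.mem_filter.mpr ⟨Finset.mem_univ _, by simpa using hS⟩⟩
  obtain ⟨S₀, hS₀mem, hS₀min⟩ := Finset.exists_min_image _ (fun S => S.1.card) hsupp
  have hcS₀ : c S₀ ≠ 0 := (Finset.mem_filter.mp hS₀mem).2
  -- key identity
  have key : ∀ A ∈ (S₀.1).powerset,
      (∑ Y ∈ ((S₀.1)ᶜ).powerset, (-1:F)^Y.card * v (A ∪ Y)) = c S₀ := by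
    intro A hA
    rw [Finset.mem_powerset] at hA
    have step1 : (∑ Y ∈ ((S₀.1)ᶜ).powerset, (-1:F)^Y.card * v (A ∪ Y))
        = ∑ S, ∑ Y ∈ ((S₀.1)ᶜ).powerset, (-1:F)^Y.card * (c S * M S (A ∪ Y)) := by
      rw [Finset.sum_comm]
      refine Finset.sum_congr rfl fun Y _ => ?_
      rw [hv]
      simp [Finset.mul_sum]
    rw [step1]
    have step2 : ∀ S : {S : Finset (Fin n) // ℓ ≤ S.card},
        (∑ Y ∈ ((S₀.1)ᶜ).powerset, (-1:F)^Y.card * (c S * M S (A ∪ Y)))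
        = if A ⊆ S.1 ∧ S.1 ⊆ S₀.1 then c S else 0 := by
      intro S
      by_cases hAS : A ⊆ S.1
      · have : ∀ Y ∈ ((S₀.1)ᶜ).powerset,
            (-1:F)^Y.card * (c S * M S (A ∪ Y))
            = (-1:F)^Y.card * (if Y ⊆ S.1 then c S else 0) := by
          intro Y _
          rw [hM]
          by_cases hYS : Y ⊆ S.1
          · simp [hYS, Finset.union_subset hAS hYS]
          · have : ¬ (A ∪ Y ⊆ S.1) := fun h => hYS (Finset.union_subset_iff.mp h).2
            simp [hYS, this]
        rw [Finset.sum_congr rfl this]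
        have hfil : ((S₀.1)ᶜ).powerset.filter (fun Y => Y ⊆ S.1)
            = ((S₀.1)ᶜ ∩ S.1).powerset := by
          ext Y
          simp only [Finset.mem_filter, Finset.mem_powerset, Finset.subset_inter_iff]
        have : (∑ Y ∈ ((S₀.1)ᶜ).powerset, (-1:F)^Y.card * (if Y ⊆ S.1 then c S else 0))
            = (∑ Y ∈ ((S₀.1)ᶜ ∩ S.1).powerset, (-1:F)^Y.card) * c S := by
          rw [Finset.sum_mul, ← hfil, Finset.sum_filter]
          refine Finset.sum_congr rfl fun Y _ => ?_
          split <;> simp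
        rw [this, my_sum_pow]
        by_cases hSS : S.1 ⊆ S₀.1
        · have : (S₀.1)ᶜ ∩ S.1 = ∅ := by
            ext x
            simp only [Finset.mem_inter, Finset.mem_compl, Finset.notMem_empty,
              iff_false, not_and]
            intro hx hxS; exact hx (hSS hxS)
          simp [this, hAS, hSS]
        · have : (S₀.1)ᶜ ∩ S.1 ≠ ∅ := by
            rw [← Finset.nonempty_iff_ne_empty]
            obtain ⟨x, hxS, hxS₀⟩ := Finset.not_subset.mp hSS
            exact ⟨x, Finset.mem_inter.mpr ⟨Finset.mem_compl.mpr hxS₀, hxS⟩⟩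
          simp [this, hSS]
      · have : ∀ Y ∈ ((S₀.1)ᶜ).powerset,
            (-1:F)^Y.card * (c S * M S (A ∪ Y)) = 0 := by
          intro Y _
          rw [hM]
          have : ¬ (A ∪ Y ⊆ S.1) := fun h => hAS (Finset.union_subset_iff.mp h).1
          simp [this]
        rw [Finset.sum_congr rfl this]
        simp [hAS]
    rw [Finset.sum_congr rfl (fun S _ => step2 S)]
    rw [Finset.sum_eq_single S₀]
    · simp [hA]
    · intro S _ hSne
      by_cases hcond : A ⊆ S.1 ∧ S.1 ⊆ S₀.1
      · by_cases hcS : c S = 0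
        · simp [hcS]
        · exfalso
          have hmem : S ∈ Finset.univ.filter
              (fun S : {S : Finset (Fin n) // ℓ ≤ S.card} => c S ≠ 0) := by
            simp [hcS]
          have hcard := hS₀min S hmem
          have : S.1 = S₀.1 := Finset.eq_of_subset_of_card_le hcond.2 hcard
          exact hSne (Subtype.ext this)
      · rw [if_neg hcond]
    · intro h; exact absurd (Finset.mem_univ S₀) h
  -- for each A ⊆ S₀, choose a column with nonzero entry
  have choice : ∀ A ∈ (S₀.1).powerset, ∃ Y, Y ⊆ (S₀.1)ᶜ ∧ v (A ∪ Y) ≠ 0 := by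
    intro A hA
    by_contra hcon
    push_neg at hcon
    have : (∑ Y ∈ ((S₀.1)ᶜ).powerset, (-1:F)^Y.card * v (A ∪ Y)) = 0 := by
      refine Finset.sum_eq_zero fun Y hY => ?_
      rw [hcon Y (Finset.mem_powerset.mp hY), mul_zero]
    rw [key A hA] at this
    exact hcS₀ this
  choose f hf1 hf2 using choice
  have hinj : ∀ (A : Finset (Fin n)) (hA : A ∈ (S₀.1).powerset)
      (B : Finset (Fin n)) (hB : B ∈ (S₀.1).powerset),
      A ∪ f A hA = B ∪ f B hB → A = B := by
    intro A hA B hB h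
    have hcap : ∀ (C) (hC : C ∈ (S₀.1).powerset), (C ∪ f C hC) ∩ S₀.1 = C := by
      intro C hC
      have hCs : C ⊆ S₀.1 := Finset.mem_powerset.mp hC
      have hfC : f C hC ⊆ (S₀.1)ᶜ := hf1 C hC
      rw [Finset.union_inter_distrib_right, Finset.inter_eq_left.mpr hCs]
      have : f C hC ∩ S₀.1 = ∅ := by
        ext x
        simp only [Finset.mem_inter, Finset.notMem_empty, iff_false, not_and]
        intro hx; exact fun hx2 => Finset.mem_compl.mp (hfC hx) hx2
      rw [this, Finset.union_empty]
    rw [← hcap A hA, ← hcap B hB, h]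
  -- conclude by an injection from the powerset of S₀
  have hcard : (S₀.1).powerset.card ≤ (Finset.univ.filter
      (fun T : Finset (Fin n) => (∑ S, c S * M S T) ≠ 0)).card := by
    apply Finset.card_le_card_of_injOn (fun A => if h : A ∈ (S₀.1).powerset then A ∪ f A h else A)
    · intro A hA
      simp only [Finset.mem_coe.mp hA, dif_pos, Finset.mem_coe, Finset.mem_filter, Finset.mem_univ, true_and]
      exact hf2 A hA
    · intro A hA B hB h
      simp only [Finset.mem_coe] at hA hB
      simp only [dif_pos hA, dif_pos hB] at h
      exact hinj A hA B hB h
  calc 2 ^ ℓ ≤ 2 ^ (S₀.1).card := Nat.pow_le_pow_right (by norm_num) S₀.2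
    _ = (S₀.1).powerset.card := (Finset.card_powerset _).symm
    _ ≤ _ := hcard
end

section
/- Let $M_{n,\ell}$ be the subset-containment matrix with rows indexed by subsets of $[n]$ of size at least $\ell$ and columns by all subsets of $[n]$, where $M_{n,\ell}(S,T)=1$ iff $T\subseteq S$. If we delete any set of at most $2^{\ell}-1$ columns from $M_{n,\ell}$, then the rows of the resulting matrix are linearly independent over any field $\mathbb{F}$. -/
open Finset
attribute [local instance] Classical.propDecidable

lemma key_lemma {F : Type*} [Field F] {α : Type*} [DecidableEq α]
    (U : Finset α) : ∀ (ℓ : ℕ) (c : Finset α → F),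
    (∀ S, c S ≠ 0 → S ⊆ U ∧ ℓ ≤ S.card) → (∃ S, c S ≠ 0) →
    2 ^ ℓ ≤ (U.powerset.filter
      (fun T => (∑ S ∈ U.powerset, if T ⊆ S then c S else 0) ≠ 0)).card := by
  induction U using Finset.induction_on with
  | empty =>
    rintro ℓ c hsupp ⟨S0, hS0⟩
    obtain ⟨hsub, hcard⟩ := hsupp S0 hS0
    rw [Finset.subset_empty] at hsub
    subst hsub
    simp only [Finset.card_empty, Nat.le_zero] at hcard
    subst hcard
    have : (∅ : Finset α) ∈ (Finset.powerset (∅:Finset α)).filter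
        (fun T => (∑ S ∈ (∅:Finset α).powerset, if T ⊆ S then c S else 0) ≠ 0) := by
      simp [hS0]
    simpa using Finset.card_pos.mpr ⟨∅, this⟩
  | @insert a U' ha ih =>
    rintro ℓ c hsupp hex
    set q : Finset α → F := fun S' => if a ∈ S' then 0 else c (insert a S') with hq_def
    set r : Finset α → F := fun S' => if a ∈ S' then 0 else c S' + c (insert a S') with hr_def
    set N := ((insert a U').powerset.filter
      (fun T => (∑ S ∈ (insert a U').powerset, if T ⊆ S then c S else 0) ≠ 0)) with hN_def
    set Nq := (U'.powerset.filter
      (fun T => (∑ S' ∈ U'.powerset, if T ⊆ S' then q S' else 0) ≠ 0)) with hNq_def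
    set Nr := (U'.powerset.filter
      (fun T => (∑ S' ∈ U'.powerset, if T ⊆ S' then r S' else 0) ≠ 0)) with hNr_def
    -- slice identities
    have hslice1 : ∀ T, T ⊆ U' →
        (∑ S ∈ (insert a U').powerset, if insert a T ⊆ S then c S else 0)
        = ∑ S' ∈ U'.powerset, if T ⊆ S' then q S' else 0 := by
      intro T hT
      have haT : a ∉ T := fun h => ha (hT h)
      rw [Finset.sum_powerset_insert ha]
      have h1 : (∑ S' ∈ U'.powerset, if insert a T ⊆ S' then c S' else 0) = 0 := by
        apply Finset.sum_eq_zero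
        intro S' hS'
        rw [Finset.mem_powerset] at hS'
        have : ¬ insert a T ⊆ S' := fun h => ha (hS' (h (Finset.mem_insert_self a T)))
        simp [this]
      rw [h1, zero_add]
      apply Finset.sum_congr rfl
      intro S' hS'
      rw [Finset.mem_powerset] at hS'
      have haS : a ∉ S' := fun h => ha (hS' h)
      have hiff : insert a T ⊆ insert a S' ↔ T ⊆ S' := by
        constructor
        · intro h x hx
          rcases Finset.mem_insert.mp (h (Finset.mem_insert_of_mem hx)) with h' | h'
          · exact absurd (h' ▸ hx) haT
          · exact h'
        · intro h; exact Finset.insert_subset_insert a h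
      simp only [hq_def, haS, if_false, hiff]
    have hslice0 : ∀ T, T ⊆ U' →
        (∑ S ∈ (insert a U').powerset, if T ⊆ S then c S else 0)
        = ∑ S' ∈ U'.powerset, if T ⊆ S' then r S' else 0 := by
      intro T hT
      have haT : a ∉ T := fun h => ha (hT h)
      rw [Finset.sum_powerset_insert ha]
      have : (∑ S' ∈ U'.powerset, if T ⊆ S' then c S' else 0)
          + (∑ S' ∈ U'.powerset, if T ⊆ insert a S' then c (insert a S') else 0)
          = ∑ S' ∈ U'.powerset, ((if T ⊆ S' then c S' else 0)
            + (if T ⊆ insert a S' then c (insert a S') else 0)) := by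
        rw [Finset.sum_add_distrib]
      rw [this]
      apply Finset.sum_congr rfl
      intro S' hS'
      rw [Finset.mem_powerset] at hS'
      have haS : a ∉ S' := fun h => ha (hS' h)
      have hiff : T ⊆ insert a S' ↔ T ⊆ S' := by
        constructor
        · intro h x hx
          rcases Finset.mem_insert.mp (h hx) with h' | h'
          · exact absurd (h' ▸ hx) haT
          · exact h'
        · intro h; exact h.trans (Finset.subset_insert a S')
      simp only [hr_def, haS, if_false, hiff]
      split <;> simp
    -- containments
    have hNr_sub : Nr ⊆ N := by
      intro T hT
      rw [hNr_def, Finset.mem_filter, Finset.mem_powerset] at hT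
      rw [hN_def, Finset.mem_filter, Finset.mem_powerset]
      exact ⟨hT.1.trans (Finset.subset_insert a U'),
        by rw [hslice0 T hT.1]; exact hT.2⟩
    have hNq_sub : Nq.image (insert a) ⊆ N := by
      intro T hT
      rw [Finset.mem_image] at hT
      obtain ⟨T', hT', rfl⟩ := hT
      rw [hNq_def, Finset.mem_filter, Finset.mem_powerset] at hT'
      rw [hN_def, Finset.mem_filter, Finset.mem_powerset]
      exact ⟨Finset.insert_subset_insert a hT'.1,
        by rw [hslice1 T' hT'.1]; exact hT'.2⟩
    have hdisj : Disjoint (Nq.image (insert a)) Nr := by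
      rw [Finset.disjoint_left]
      intro T hT1 hT2
      rw [Finset.mem_image] at hT1
      obtain ⟨T', _, rfl⟩ := hT1
      rw [hNr_def, Finset.mem_filter, Finset.mem_powerset] at hT2
      exact ha (hT2.1 (Finset.mem_insert_self a T'))
    have hinj : Set.InjOn (insert a) (Nq : Set (Finset α)) := by
      intro T1 hT1 T2 hT2 h
      rw [hNq_def, Finset.coe_filter] at hT1 hT2
      have h1 : a ∉ T1 := fun hh => ha ((Finset.mem_powerset.mp hT1.1) hh)
      have h2 : a ∉ T2 := fun hh => ha ((Finset.mem_powerset.mp hT2.1) hh)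
      have := congrArg (Finset.erase · a) h
      simpa [Finset.erase_insert h1, Finset.erase_insert h2] using this
    have hcount : Nq.card + Nr.card ≤ N.card := by
      rw [← Finset.card_image_of_injOn hinj, ← Finset.card_union_of_disjoint hdisj]
      exact Finset.card_le_card (Finset.union_subset hNq_sub hNr_sub)
    -- support lemmas
    have hq_supp : ∀ S', q S' ≠ 0 → S' ⊆ U' ∧ ℓ - 1 ≤ S'.card := by
      intro S' h
      by_cases haS : a ∈ S'
      · simp [hq_def, haS] at h
      · simp only [hq_def, haS, if_false] at h
        obtain ⟨h1, h2⟩ := hsupp _ h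
        have hsub : S' ⊆ U' := by
          intro x hx
          rcases Finset.mem_insert.mp (h1 (Finset.mem_insert_of_mem hx)) with h' | h'
          · exact absurd (h' ▸ hx) haS
          · exact h'
        have := Finset.card_insert_of_notMem haS
        constructor
        · exact hsub
        · omega
    have hsubU : ∀ S', a ∉ S' → c S' ≠ 0 → S' ⊆ U' := by
      intro S' haS h x hx
      rcases Finset.mem_insert.mp ((hsupp _ h).1 hx) with h' | h'
      · exact absurd (h' ▸ hx) haS
      · exact h'
    by_cases hq0 : ∀ S', q S' = 0
    · -- q ≡ 0, so r = c on subsets of U'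
      have hr_supp : ∀ S', r S' ≠ 0 → S' ⊆ U' ∧ ℓ ≤ S'.card := by
        intro S' h
        by_cases haS : a ∈ S'
        · simp [hr_def, haS] at h
        · have hqz := hq0 S'
          simp only [hq_def, haS, if_false] at hqz
          simp only [hr_def, haS, if_false, hqz, add_zero] at h
          exact ⟨hsubU S' haS h, (hsupp _ h).2⟩
      have hr_ne : ∃ S', r S' ≠ 0 := by
        obtain ⟨S0, hS0⟩ := hex
        by_cases haS : a ∈ S0
        · exfalso
          have hqz := hq0 (S0.erase a)
          simp only [hq_def, Finset.mem_erase, ne_eq, not_true_eq_false, false_and,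
            if_false, Finset.insert_erase haS] at hqz
          exact hS0 hqz
        · refine ⟨S0, ?_⟩
          have hqz := hq0 S0
          simp only [hq_def, haS, if_false] at hqz
          simp only [hr_def, haS, if_false, hqz, add_zero]
          exact hS0
      calc 2 ^ ℓ ≤ Nr.card := ih ℓ r hr_supp hr_ne
        _ ≤ N.card := Finset.card_le_card hNr_sub
    · push_neg at hq0
      by_cases hr0 : ∀ S', r S' = 0
      · -- r ≡ 0, so q = -c on subsets of U'
        have hq_supp' : ∀ S', q S' ≠ 0 → S' ⊆ U' ∧ ℓ ≤ S'.card := by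
          intro S' h
          by_cases haS : a ∈ S'
          · simp [hq_def, haS] at h
          · simp only [hq_def, haS, if_false] at h
            have hrz := hr0 S'
            simp only [hr_def, haS, if_false] at hrz
            have hcS : c S' ≠ 0 := by
              intro h0; rw [h0, zero_add] at hrz; exact h hrz
            exact ⟨hsubU S' haS hcS, (hsupp _ hcS).2⟩
        calc 2 ^ ℓ ≤ Nq.card := ih ℓ q hq_supp' hq0
          _ = (Nq.image (insert a)).card := (Finset.card_image_of_injOn hinj).symm
          _ ≤ N.card := Finset.card_le_card hNq_sub
      · push_neg at hr0
        have hr_supp : ∀ S', r S' ≠ 0 → S' ⊆ U' ∧ ℓ - 1 ≤ S'.card := by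
          intro S' h
          by_cases haS : a ∈ S'
          · simp [hr_def, haS] at h
          · simp only [hr_def, haS, if_false] at h
            have hsub : S' ⊆ U' := by
              by_cases hcS : c S' = 0
              · rw [hcS, zero_add] at h
                exact (hq_supp S' (by simp only [hq_def, haS, if_false]; exact h)).1
              · exact hsubU S' haS hcS
            refine ⟨hsub, ?_⟩
            by_cases hcS : c S' = 0
            · rw [hcS, zero_add] at h
              exact (hq_supp S' (by simp only [hq_def, haS, if_false]; exact h)).2
            · have := (hsupp _ hcS).2; omega
        have h1 : 2 ^ (ℓ - 1) ≤ Nq.card := ih (ℓ - 1) q hq_supp hq0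
        have h2 : 2 ^ (ℓ - 1) ≤ Nr.card := ih (ℓ - 1) r hr_supp hr0
        have hpow : 2 ^ ℓ ≤ 2 ^ (ℓ - 1) + 2 ^ (ℓ - 1) := by
          rcases ℓ with _ | m
          · simp
          · simp only [Nat.add_sub_cancel, pow_succ]
            omega
        omega
/-- Deleting at most `2^ℓ - 1` columns from the subset-containment matrix
`M_{n,ℓ}` leaves a matrix whose rows are linearly independent over any field. -/
theorem stmt1 {F : Type*} [Field F] (n ℓ : ℕ) (hℓ : ℓ ≤ n)
    (M : {S : Finset (Fin n) // ℓ ≤ S.card} → Finset (Fin n) → F)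
    (hM : ∀ S T, M S T = if T ⊆ S.1 then 1 else 0)
    (J : Finset (Finset (Fin n))) (hJ : J.card ≤ 2 ^ ℓ - 1) :
    LinearIndependent F
      (fun (S : {S : Finset (Fin n) // ℓ ≤ S.card})
        (T : {T : Finset (Fin n) // T ∉ J}) => M S T.1) := by
  rw [Fintype.linearIndependent_iff]
  intro g hg
  by_contra hgS
  push_neg at hgS
  obtain ⟨S0, hS0⟩ := hgS
  set c : Finset (Fin n) → F :=
    fun S => if h : ℓ ≤ S.card then g ⟨S, h⟩ else 0 with hc
  have hsupp : ∀ S, c S ≠ 0 → S ⊆ (Finset.univ : Finset (Fin n)) ∧ ℓ ≤ S.card := by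
    intro S h
    refine ⟨Finset.subset_univ _, ?_⟩
    by_contra h'
    simp [hc, h'] at h
  have hex : ∃ S, c S ≠ 0 := by
    refine ⟨S0.1, ?_⟩
    simp only [hc, S0.2, dif_pos, Subtype.coe_eta]
    exact hS0
  -- express f T via g
  have hf : ∀ T : Finset (Fin n),
      (∑ S ∈ (Finset.univ : Finset (Fin n)).powerset, if T ⊆ S then c S else 0)
      = ∑ S : {S : Finset (Fin n) // ℓ ≤ S.card}, if T ⊆ S.1 then g S else 0 := by
    intro T
    rw [Finset.powerset_univ]
    rw [← Fintype.sum_subtype_add_sum_subtype (fun S : Finset (Fin n) => ℓ ≤ S.card)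
      (fun S => if T ⊆ S then c S else 0)]
    have hz : (∑ S : {S : Finset (Fin n) // ¬ ℓ ≤ S.card},
        if T ⊆ S.1 then c S.1 else 0) = 0 := by
      apply Finset.sum_eq_zero
      intro S _
      have : c S.1 = 0 := by simp [hc, S.2]
      simp [this]
    rw [hz, add_zero]
    apply Finset.sum_congr rfl
    intro S _
    have : c S.1 = g S := by simp only [hc, S.2, dif_pos, Subtype.coe_eta]
    rw [this]
  have hzero : ∀ T : Finset (Fin n), T ∉ J →
      (∑ S ∈ (Finset.univ : Finset (Fin n)).powerset, if T ⊆ S then c S else 0) = 0 := by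
    intro T hT
    rw [hf]
    have := congrFun hg ⟨T, hT⟩
    simp only [Finset.sum_apply, Pi.smul_apply, Pi.zero_apply, smul_eq_mul] at this
    have heq : (∑ S : {S : Finset (Fin n) // ℓ ≤ S.card}, if T ⊆ S.1 then g S else 0)
        = ∑ S : {S : Finset (Fin n) // ℓ ≤ S.card}, g S * M S T := by
      apply Finset.sum_congr rfl
      intro S _
      rw [hM]
      split <;> simp
    rw [heq]
    exact this
  have hkey := key_lemma (F := F) (Finset.univ : Finset (Fin n)) ℓ c hsupp hex
  have hsub : ((Finset.univ : Finset (Fin n)).powerset.filter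
      (fun T => (∑ S ∈ (Finset.univ : Finset (Fin n)).powerset,
        if T ⊆ S then c S else 0) ≠ 0)) ⊆ J := by
    intro T hT
    rw [Finset.mem_filter] at hT
    by_contra hTJ
    exact hT.2 (hzero T hTJ)
  have hle := Finset.card_le_card hsub
  have hpos : 0 < 2 ^ ℓ := Nat.pow_pos (by norm_num)
  omega
end

section
/- Let $D(\bar x) = \prod_{i=1}^d D_i(\bar x_i) \in \mathbb{F}^{w\times w}[\bar x]$ be a product of matrix polynomials over disjoint variable sets, such that the constant term $D_{i\mathbf{0}}$ of each $D_i$ is an invertible matrix. Then $D$ has $w^2$-block-support concentration: every coefficient $D_e = \prod_{i=1}^d D_{i e_i}$ of a monomial $\bar x^e$ lies in the $\mathbb{F}$-linear span of the coefficients $D_f$ of monomials $\bar x^f$ with block-support $\mathrm{bS}(f) \subset \mathrm{bS}(e)$ (when $\mathrm{bs}(e) \ge w^2$) and $\mathrm{bs}(f) \le w^2 - 1$. -/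
section Aux

variable {F : Type*} [Field F] {w d : ℕ} {n : Fin d → ℕ}

/-- entry function extended to `ℕ` indices -/
noncomputable def gfun (Di : ∀ i : Fin d, ((Fin (n i)) →₀ ℕ) → Matrix (Fin w) (Fin w) F)
    (f : ∀ i : Fin d, (Fin (n i)) →₀ ℕ) : ℕ → Matrix (Fin w) (Fin w) F :=
  fun i => if h : i < d then Di ⟨i, h⟩ (f ⟨i, h⟩) else 1

/-- partial (interval) ordered product -/
noncomputable def PP (Di : ∀ i : Fin d, ((Fin (n i)) →₀ ℕ) → Matrix (Fin w) (Fin w) F)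
    (f : ∀ i : Fin d, (Fin (n i)) →₀ ℕ) (a l : ℕ) : Matrix (Fin w) (Fin w) F :=
  ((List.range' a l).map (gfun Di f)).prod

variable (Di : ∀ i : Fin d, ((Fin (n i)) →₀ ℕ) → Matrix (Fin w) (Fin w) F)

lemma PP_split (f : ∀ i : Fin d, (Fin (n i)) →₀ ℕ) (a l₁ l₂ : ℕ) :
    PP Di f a (l₁ + l₂) = PP Di f a l₁ * PP Di f (a + l₁) l₂ := by
  have h := List.range'_append (s := a) (m := l₁) (n := l₂) (step := 1)
  simp only [one_mul] at h
  unfold PP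
  rw [← List.prod_append, ← List.map_append, h]

lemma PP_congr (f g : ∀ i : Fin d, (Fin (n i)) →₀ ℕ) (a l : ℕ)
    (h : ∀ i : Fin d, a ≤ i.val → i.val < a + l → f i = g i) :
    PP Di f a l = PP Di g a l := by
  unfold PP
  congr 1
  apply List.map_congr_left
  intro i hi
  rw [List.mem_range'_1] at hi
  unfold gfun
  split_ifs with hd
  · rw [h ⟨i, hd⟩ hi.1 hi.2]
  · rfl

lemma PP_eq_prod (f : ∀ i : Fin d, (Fin (n i)) →₀ ℕ) :
    ((List.finRange d).map (fun i => Di i (f i))).prod = PP Di f 0 d := by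
  unfold PP
  rw [← List.range_eq_range', ← (show (List.finRange d).map Fin.val = List.range d from
    List.ext_getElem (by simp) (by simp)), List.map_map]
  congr 1
  apply List.map_congr_left
  intro i _
  simp only [Function.comp_apply]
  unfold gfun
  rw [dif_pos i.isLt]

lemma PP_zero_isUnit (hinv : ∀ i, IsUnit (Di i 0)) (a l : ℕ) :
    IsUnit (PP Di (fun _ => 0) a l) := by
  apply List.prod_isUnit
  intro m hm
  simp only [List.mem_map] at hm
  obtain ⟨i, -, rfl⟩ := hm
  unfold gfun
  split_ifs
  · exact hinv _
  · exact isUnit_one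

lemma step_lemma (hinv : ∀ i, IsUnit (Di i 0)) (hw : 0 < w)
    (e : ∀ i : Fin d, (Fin (n i)) →₀ ℕ)
    (he : w ^ 2 ≤ (Finset.univ.filter (fun i => e i ≠ 0)).card) :
    (((List.finRange d).map (fun i => Di i (e i))).prod) ∈
      Submodule.span F {v : Matrix (Fin w) (Fin w) F |
        ∃ f : ∀ i : Fin d, (Fin (n i)) →₀ ℕ,
          (Finset.univ.filter (fun i => f i ≠ 0)) ⊂ (Finset.univ.filter (fun i => e i ≠ 0)) ∧
          v = ((List.finRange d).map (fun i => Di i (f i))).prod} := by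
  classical
  set S := Finset.univ.filter (fun i => e i ≠ 0) with hSdef
  set k := S.card with hkdef
  let iso := S.orderIsoOfFin rfl
  let j : ℕ → ℕ := fun t => if h : t < k then ((iso ⟨t, h⟩ : Fin d) : ℕ) else d
  have hjd : ∀ t, j t ≤ d := by
    intro t; show (if h : t < k then _ else _) ≤ d
    split_ifs with h
    · exact le_of_lt (Fin.is_lt _)
    · exact le_rfl
  have hjmono : ∀ t t' : ℕ, t < k → t < t' → j t < j t' := by
    intro t t' ht htt'
    show (if h : t < k then _ else _) < (if h : t' < k then _ else _)
    rw [dif_pos ht]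
    split_ifs with h'
    · have : iso ⟨t, ht⟩ < iso ⟨t', h'⟩ := iso.strictMono (by exact htt')
      exact this
    · exact Fin.is_lt _
  -- the constant ("zero") exponent vector
  set zvec : ∀ i : Fin d, (Fin (n i)) →₀ ℕ := fun _ => 0 with hzdef
  have hz : ∀ a l, IsUnit (PP Di zvec a l) := PP_zero_isUnit Di hinv
  -- the prefix comparison matrices
  set R : ℕ → Matrix (Fin w) (Fin w) F :=
    fun t => PP Di e 0 (j t) * (PP Di zvec 0 (j t))⁻¹ with hRdef
  -- linear dependence
  have hdep : ¬ LinearIndependent F (fun t : Fin (w ^ 2 + 1) => R t) := by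
    intro hli
    have hcard := hli.fintype_card_le_finrank
    rw [Fintype.card_fin, Module.finrank_matrix] at hcard
    simp only [Fintype.card_fin, Module.finrank_self, mul_one] at hcard
    nlinarith [sq_nonneg w]
  obtain ⟨c, hsum, t0, ht0⟩ := Fintype.not_linearIndependent_iff.mp hdep
  set T : Finset (Fin (w ^ 2 + 1)) := Finset.univ.filter (fun t => c t ≠ 0) with hTdef
  have hTne : T.Nonempty := ⟨t0, by simp [hTdef, ht0]⟩
  set m : Fin (w ^ 2 + 1) := T.max' hTne with hmdef
  have hcm : c m ≠ 0 := (Finset.mem_filter.mp (T.max'_mem hTne)).2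
  have hmax : ∀ t ∈ T, t ≤ m := fun t ht => T.le_max' t ht
  have hmk : (m : ℕ) ≤ k := le_trans (Nat.lt_succ_iff.mp m.isLt) he
  -- right multiplier
  set X : Matrix (Fin w) (Fin w) F :=
    PP Di zvec 0 (j m) * PP Di e (j m) (d - j m) with hXdef
  -- key product computation
  have hkey : ∀ t : Fin (w ^ 2 + 1), (t : ℕ) ≤ (m : ℕ) →
      R t * X = PP Di e 0 (j t) * PP Di zvec (j t) (j m - j t) * PP Di e (j m) (d - j m) := by
    intro t ht
    have hjtm : j t ≤ j m := by
      rcases lt_or_eq_of_le ht with h | h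
      · exact le_of_lt (hjmono t m (lt_of_lt_of_le h hmk) h)
      · rw [h]
    have hsplit : PP Di zvec 0 (j m) = PP Di zvec 0 (j t) * PP Di zvec (j t) (j m - j t) := by
      have h1 := PP_split Di zvec 0 (j t) (j m - j t)
      rw [Nat.add_sub_cancel' hjtm, Nat.zero_add] at h1
      exact h1
    have hdet : IsUnit (PP Di zvec 0 (j t)).det :=
      (Matrix.isUnit_iff_isUnit_det _).mp (hz 0 (j t))
    rw [hRdef, hXdef, hsplit]
    rw [show PP Di e 0 (j ↑t) * (PP Di zvec 0 (j ↑t))⁻¹ *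
        (PP Di zvec 0 (j ↑t) * PP Di zvec (j ↑t) (j ↑m - j ↑t) * PP Di e (j ↑m) (d - j ↑m)) =
        PP Di e 0 (j ↑t) * ((PP Di zvec 0 (j ↑t))⁻¹ * PP Di zvec 0 (j ↑t)) *
        PP Di zvec (j ↑t) (j ↑m - j ↑t) * PP Di e (j ↑m) (d - j ↑m) by simp only [mul_assoc]]
    rw [Matrix.nonsing_inv_mul _ hdet, mul_one]
  -- the t = m case gives the full product
  have hRm : R m * X = ((List.finRange d).map (fun i => Di i (e i))).prod := by
    rw [hkey m le_rfl, Nat.sub_self]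
    have h0 : PP Di zvec (j m) 0 = 1 := by
      unfold PP; simp
    rw [h0, mul_one, PP_eq_prod]
    have h1 := PP_split Di e 0 (j m) (d - j m)
    rw [Nat.add_sub_cancel' (hjd m), Nat.zero_add] at h1
    exact h1.symm
  -- the t < m case gives a coefficient with strictly smaller support
  have hRt : ∀ t : Fin (w ^ 2 + 1), (t : ℕ) < (m : ℕ) →
      R t * X ∈ {v : Matrix (Fin w) (Fin w) F |
        ∃ f : ∀ i : Fin d, (Fin (n i)) →₀ ℕ,
          (Finset.univ.filter (fun i => f i ≠ 0)) ⊂ S ∧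
          v = ((List.finRange d).map (fun i => Di i (f i))).prod} := by
    intro t htm
    have htk : (t : ℕ) < k := lt_of_lt_of_le htm hmk
    have hjtm : j t < j m := hjmono t m htk htm
    set f : ∀ i : Fin d, (Fin (n i)) →₀ ℕ :=
      fun i => if j t ≤ (i : ℕ) ∧ (i : ℕ) < j m then 0 else e i with hfdef
    refine ⟨f, ?_, ?_⟩
    · -- strict subset of supports
      have hsub : (Finset.univ.filter (fun i => f i ≠ 0)) ⊆ S := by
        intro i hi
        rw [Finset.mem_filter] at hi
        rw [hSdef, Finset.mem_filter]
        refine ⟨Finset.mem_univ _, fun h0 => hi.2 ?_⟩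
        rw [hfdef]
        simp only
        split_ifs
        · rfl
        · exact h0
      rw [Finset.ssubset_iff_of_subset hsub]
      refine ⟨(iso ⟨(t : ℕ), htk⟩ : Fin d), ?_, ?_⟩
      · exact (iso ⟨(t : ℕ), htk⟩).2
      · rw [Finset.mem_filter]
        rintro ⟨-, hne⟩
        apply hne
        rw [hfdef]
        simp only
        rw [if_pos]
        constructor
        · show j t ≤ _
          have : j t = ((iso ⟨(t : ℕ), htk⟩ : Fin d) : ℕ) := dif_pos htk
          rw [this]
        · show ((iso ⟨(t : ℕ), htk⟩ : Fin d) : ℕ) < j m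
          have : j t = ((iso ⟨(t : ℕ), htk⟩ : Fin d) : ℕ) := dif_pos htk
          rw [← this]; exact hjtm
    · -- the product identity
      rw [hkey t (le_of_lt htm), PP_eq_prod]
      have harith : j t + ((j m - j t) + (d - j m)) = d := by
        have := hjd m; omega
      rw [show PP Di f 0 d = PP Di f 0 (j t + ((j m - j t) + (d - j m))) by rw [harith]]
      rw [PP_split, PP_split, Nat.zero_add, Nat.add_sub_cancel' (le_of_lt hjtm)]
      rw [← mul_assoc]
      congr 1
      · congr 1
        · apply PP_congr
          intro i h1 h2
          rw [hfdef]
          simp only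
          rw [if_neg]
          omega
        · apply PP_congr
          intro i h1 h2
          rw [hfdef, hzdef]
          simp only
          rw [if_pos]
          constructor
          · exact h1
          · omega
      · apply PP_congr
        intro i h1 h2
        rw [hfdef]
        simp only
        rw [if_neg]
        omega
  -- assemble
  have hXsum : ∑ t : Fin (w ^ 2 + 1), c t • (R t * X) = 0 := by
    have h := congrArg (fun M => M * X) hsum
    simp only [Finset.sum_mul, smul_mul_assoc, zero_mul] at h
    exact h
  have hTsum : ∑ t ∈ T, c t • (R t * X) = 0 := by
    rw [← hXsum]
    apply Finset.sum_subset T.subset_univ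
    intro x _ hx
    have : c x = 0 := by
      by_contra hcx
      exact hx (by rw [hTdef, Finset.mem_filter]; exact ⟨Finset.mem_univ _, hcx⟩)
    rw [this, zero_smul]
  have hkey2 : c m • (R m * X) = - ∑ t ∈ T.erase m, c t • (R t * X) := by
    have h := Finset.add_sum_erase T (fun t => c t • (R t * X)) (T.max'_mem hTne)
    rw [hTsum] at h
    exact eq_neg_of_add_eq_zero_left h
  have hfinal : ((List.finRange d).map (fun i => Di i (e i))).prod =
      (c m)⁻¹ • (- ∑ t ∈ T.erase m, c t • (R t * X)) := by
    rw [← hkey2, smul_smul, inv_mul_cancel₀ hcm, one_smul, hRm]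
  rw [hfinal]
  apply Submodule.smul_mem
  apply neg_mem
  apply Submodule.sum_mem
  intro t ht
  apply Submodule.smul_mem
  apply Submodule.subset_span
  have htm : (t : ℕ) < (m : ℕ) := by
    have h1 : t ≤ m := hmax t (Finset.mem_of_mem_erase ht)
    have h2 : t ≠ m := Finset.ne_of_mem_erase ht
    exact lt_of_le_of_ne h1 (fun h => h2 (Fin.ext h))
  exact hRt t htm

end Aux

/-- `w²`-block-support concentration: for a product `D = ∏ᵢ Dᵢ(x̄ᵢ)` of matrix
polynomials over disjoint variable blocks whose constant terms `Dᵢ(0)` are all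
invertible, every coefficient `D_e = ∏ᵢ Dᵢ(eᵢ)` of a monomial with block
support of size at least `w²` lies in the `F`-span of coefficients `D_f` of
monomials with `bS(f) ⊂ bS(e)` and `bs(f) ≤ w² - 1`. -/
theorem stmt9 {F : Type*} [Field F] (w d : ℕ) (n : Fin d → ℕ)
    (Di : ∀ i : Fin d, ((Fin (n i)) →₀ ℕ) → Matrix (Fin w) (Fin w) F)
    (hinv : ∀ i, IsUnit (Di i 0)) :
    ∀ e : ∀ i : Fin d, (Fin (n i)) →₀ ℕ,
      w ^ 2 ≤ (Finset.univ.filter (fun i => e i ≠ 0)).card →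
      (((List.finRange d).map (fun i => Di i (e i))).prod) ∈
        Submodule.span F {v : Matrix (Fin w) (Fin w) F |
          ∃ f : ∀ i : Fin d, (Fin (n i)) →₀ ℕ,
            (Finset.univ.filter (fun i => f i ≠ 0)) ⊂
              (Finset.univ.filter (fun i => e i ≠ 0)) ∧
            (Finset.univ.filter (fun i => f i ≠ 0)).card ≤ w ^ 2 - 1 ∧
            v = ((List.finRange d).map (fun i => Di i (f i))).prod} := by
  classical
  rcases Nat.eq_zero_or_pos w with hw | hw
  · subst hw
    intro e _
    have h0 : (((List.finRange d).map (fun i => Di i (e i))).prod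
        : Matrix (Fin 0) (Fin 0) F) = 0 := by
      ext i
      exact i.elim0
    rw [h0]
    exact Submodule.zero_mem _
  · have hw2 : 0 < w ^ 2 := pow_pos hw 2
    have main : ∀ N : ℕ, ∀ e : ∀ i : Fin d, (Fin (n i)) →₀ ℕ,
        w ^ 2 ≤ (Finset.univ.filter (fun i => e i ≠ 0)).card →
        (Finset.univ.filter (fun i => e i ≠ 0)).card ≤ N →
        (((List.finRange d).map (fun i => Di i (e i))).prod) ∈
          Submodule.span F {v : Matrix (Fin w) (Fin w) F |
            ∃ f : ∀ i : Fin d, (Fin (n i)) →₀ ℕ,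
              (Finset.univ.filter (fun i => f i ≠ 0)) ⊂
                (Finset.univ.filter (fun i => e i ≠ 0)) ∧
              (Finset.univ.filter (fun i => f i ≠ 0)).card ≤ w ^ 2 - 1 ∧
              v = ((List.finRange d).map (fun i => Di i (f i))).prod} := by
      intro N
      induction N with
      | zero => intro e h1 h2; omega
      | succ N ih =>
        intro e h1 h2
        have hstep := step_lemma Di hinv hw e h1
        refine Submodule.span_le.mpr ?_ hstep
        rintro v ⟨f, hfe, rfl⟩
        by_cases hcard : (Finset.univ.filter (fun i => f i ≠ 0)).card ≤ w ^ 2 - 1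
        · exact Submodule.subset_span ⟨f, hfe, hcard, rfl⟩
        · have hf2 : w ^ 2 ≤ (Finset.univ.filter (fun i => f i ≠ 0)).card := by omega
          have hlt := Finset.card_lt_card hfe
          have hfN : (Finset.univ.filter (fun i => f i ≠ 0)).card ≤ N := by omega
          have hmem := ih f hf2 hfN
          refine Submodule.span_le.mpr ?_ hmem
          rintro v ⟨g, hgf, hgc, rfl⟩
          exact Submodule.subset_span ⟨g, hgf.trans hfe, hgc, rfl⟩
    intro e he
    exact main _ e he le_rfl
end

section
/- Let $D(\bar x) = \prod_{i=1}^d D_i(\bar x_i) \in \mathbb{F}^{w\times w}[\bar x]$ be a product over disjoint variable sets with each constant term $D_{i\mathbf{0}}$ invertible. Suppose $D$ has $\ell$-block-support concentration (every coefficient is in the span of coefficients of monomials with block-support size at most $\ell-1$) and each $D_i$ has $\ell'$-support concentration (every coefficient $D_{ie_i}$ is in the span of coefficients $D_{ig_i}$ with $\mathrm{s}(g_i) \le \ell'-1$). Then $D$ has $((\ell-1)(\ell'-1)+1)$-support concentration: every coefficient of $D$ is in the $\mathbb{F}$-span of coefficients of monomials of support size at most $(\ell-1)(\ell'-1)$.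 -/
lemma list_prod_mem_span' {R A ι : Type*} [CommSemiring R] [Semiring A] [Algebra R A]
    [DecidableEq ι] (L : List ι) (hL : L.Nodup) (a : ι → A) (S : ι → Set A)
    (h : ∀ i ∈ L, a i ∈ Submodule.span R (S i)) :
    (L.map a).prod ∈
      Submodule.span R {v : A | ∃ b : ι → A, (∀ i ∈ L, b i ∈ S i) ∧ v = (L.map b).prod} := by
  induction L with
  | nil => exact Submodule.subset_span ⟨a, by simp⟩
  | cons i L ih =>
    simp only [List.map_cons, List.prod_cons]
    have hiL : i ∉ L := (List.nodup_cons.mp hL).1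
    have h1 : a i ∈ Submodule.span R (S i) := h i (List.mem_cons_self)
    have h2 := ih (List.nodup_cons.mp hL).2 (fun j hj => h j (List.mem_cons_of_mem _ hj))
    have hm := Submodule.mul_mem_mul h1 h2
    rw [Submodule.span_mul_span] at hm
    refine Submodule.span_le.mpr ?_ hm
    rintro x hx
    obtain ⟨s, hs, t, ht, rfl⟩ := Set.mem_mul.mp hx
    obtain ⟨b, hb, rfl⟩ := ht
    refine Submodule.subset_span ⟨Function.update b i s, ?_, ?_⟩
    · intro j hj
      rcases List.mem_cons.mp hj with rfl | hjL
      · simpa using hs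
      · rw [Function.update_of_ne (by rintro rfl; exact hiL hjL)]; exact hb j hjL
    · have : L.map (Function.update b i s) = L.map b :=
        List.map_congr_left (fun j hj => Function.update_of_ne (by rintro rfl; exact hiL hj) _ _)
      simp [this]

/-- Composition: if the product `D = ∏ᵢ Dᵢ(x̄ᵢ)` (disjoint variable blocks,
invertible constant terms) has `ℓ`-block-support concentration and each factor
`Dᵢ` has `ℓ'`-support concentration, then `D` has
`((ℓ-1)(ℓ'-1)+1)`-support concentration: every coefficient lies in the span of
coefficients of monomials of total support at most `(ℓ-1)(ℓ'-1)`. -/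
theorem stmt10 {F : Type*} [Field F] (w d ℓ ℓ' : ℕ) (n : Fin d → ℕ)
    (Di : ∀ i : Fin d, ((Fin (n i)) →₀ ℕ) → Matrix (Fin w) (Fin w) F)
    (hinv : ∀ i, IsUnit (Di i 0))
    (hblock : ∀ e : ∀ i : Fin d, (Fin (n i)) →₀ ℕ,
      (((List.finRange d).map (fun i => Di i (e i))).prod) ∈
        Submodule.span F {v : Matrix (Fin w) (Fin w) F |
          ∃ f : ∀ i : Fin d, (Fin (n i)) →₀ ℕ,
            (Finset.univ.filter (fun i => f i ≠ 0)).card ≤ ℓ - 1 ∧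
            v = ((List.finRange d).map (fun i => Di i (f i))).prod})
    (hfac : ∀ (i : Fin d) (ei : (Fin (n i)) →₀ ℕ),
      Di i ei ∈ Submodule.span F {v : Matrix (Fin w) (Fin w) F |
        ∃ gi : (Fin (n i)) →₀ ℕ, gi.support.card ≤ ℓ' - 1 ∧ v = Di i gi}) :
    ∀ e : ∀ i : Fin d, (Fin (n i)) →₀ ℕ,
      (((List.finRange d).map (fun i => Di i (e i))).prod) ∈
        Submodule.span F {v : Matrix (Fin w) (Fin w) F |
          ∃ g : ∀ i : Fin d, (Fin (n i)) →₀ ℕ,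
            (∑ i, (g i).support.card) ≤ (ℓ - 1) * (ℓ' - 1) ∧
            v = ((List.finRange d).map (fun i => Di i (g i))).prod} := by
  classical
  intro e
  refine Submodule.span_le.mpr ?_ (hblock e)
  rintro v ⟨f, hf, rfl⟩
  have key := list_prod_mem_span' (R := F) (List.finRange d) (List.nodup_finRange d)
    (fun i => Di i (f i))
    (fun i => {v : Matrix (Fin w) (Fin w) F |
      ∃ gi : (Fin (n i)) →₀ ℕ,
        gi.support.card ≤ (if f i = 0 then 0 else ℓ' - 1) ∧ v = Di i gi})
    (fun i _ => by
      by_cases h0 : f i = 0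
      · exact Submodule.subset_span ⟨0, by simp [h0]⟩
      · simpa [h0] using hfac i (f i))
  refine Submodule.span_le.mpr ?_ key
  rintro v ⟨b, hb, rfl⟩
  choose g hg1 hg2 using fun i => hb i (List.mem_finRange i)
  refine Submodule.subset_span ⟨g, ?_, ?_⟩
  · calc ∑ i, (g i).support.card
        ≤ ∑ i, (if f i = 0 then 0 else ℓ' - 1) := Finset.sum_le_sum (fun i _ => hg1 i)
      _ = (Finset.univ.filter (fun i => f i ≠ 0)).card * (ℓ' - 1) := by
          rw [Finset.card_filter, Finset.sum_mul]
          refine Finset.sum_congr rfl fun i _ => ?_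
          by_cases h0 : f i = 0 <;> simp [h0]
      _ ≤ (ℓ - 1) * (ℓ' - 1) := Nat.mul_le_mul_right _ hf
  · exact congrArg List.prod (List.map_congr_left fun i _ => hg2 i)
end

section
/- Let $A$ be a set of $a$ monomials in $n$ variables with individual degrees at most $d$. Map each monomial via the Kronecker substitution $t_i \mapsto t^{(d+1)^{i-1}}$, obtaining degrees $d_1,\dots,d_a$ in $t$, which are pairwise distinct. Then for $N := n d a^2 \log(d+1)$, among the first $N$ primes there exists a prime $p$ such that the residues $d_1 \bmod p, \dots, d_a \bmod p$ are pairwise distinct. -/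
private lemma kron_lt (b : ℕ) : ∀ (n : ℕ) (f : Fin n → ℕ), (∀ i, f i < b) →
    (∑ i, f i * b ^ (i : ℕ)) < b ^ n := by
  intro n
  induction n with
  | zero => intro f _; simp
  | succ m ih =>
    intro f hf
    rw [Fin.sum_univ_succ]
    have h1 : ∑ i : Fin m, f i.succ * b ^ ((i.succ : Fin (m+1)) : ℕ)
        = b * ∑ i : Fin m, f i.succ * b ^ (i : ℕ) := by
      rw [Finset.mul_sum]
      congr 1; funext i
      simp [Fin.val_succ, pow_succ]; ring
    rw [h1]
    have hS : (∑ i : Fin m, f i.succ * b ^ (i : ℕ)) < b ^ m :=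
      ih (fun i => f i.succ) (fun i => hf i.succ)
    have hf0 : f 0 < b := hf 0
    have hp : b ^ (m + 1) = b * b ^ m := by rw [pow_succ]; ring
    simp only [Fin.val_zero, pow_zero, mul_one]
    nlinarith [hS, hf0]

private lemma kron_inj (b : ℕ) : ∀ (n : ℕ) (f g : Fin n → ℕ), (∀ i, f i < b) →
    (∀ i, g i < b) → (∑ i, f i * b ^ (i : ℕ)) = (∑ i, g i * b ^ (i : ℕ)) → f = g := by
  intro n
  induction n with
  | zero => intro f g _ _ _; funext i; exact i.elim0
  | succ m ih =>
    intro f g hf hg heq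
    have hb : 0 < b := lt_of_le_of_lt (Nat.zero_le _) (hf 0)
    have expand : ∀ h : Fin (m+1) → ℕ, (∑ i, h i * b ^ (i : ℕ))
        = h 0 + b * ∑ i : Fin m, h i.succ * b ^ (i : ℕ) := by
      intro h
      rw [Fin.sum_univ_succ]
      congr 1
      · simp
      · rw [Finset.mul_sum]; congr 1; funext i
        simp [Fin.val_succ, pow_succ]; ring
    rw [expand f, expand g] at heq
    have h0 : f 0 = g 0 := by
      have := congrArg (· % b) heq
      simpa [Nat.add_mul_mod_self_left, Nat.mod_eq_of_lt (hf 0),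
        Nat.mod_eq_of_lt (hg 0)] using this
    have hsum : (∑ i : Fin m, f i.succ * b ^ (i : ℕ))
        = ∑ i : Fin m, g i.succ * b ^ (i : ℕ) := by
      rw [h0] at heq
      have := Nat.add_left_cancel heq
      exact Nat.eq_of_mul_eq_mul_left hb this
    have htail := ih (fun i => f i.succ) (fun i => g i.succ)
      (fun i => hf i.succ) (fun i => hg i.succ) hsum
    funext i
    refine Fin.cases h0 (fun j => ?_) i
    exact congrFun htail j

/-- Kronecker substitution and prime modular separation: the Kronecker degrees
`deg e = ∑ᵢ eᵢ (d+1)^i` of a set `A` of `n`-variate monomials with individual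
degrees at most `d` are pairwise distinct, and among the first
`N = n·d·|A|²·⌈log₂(d+1)⌉` primes there is one modulo which they remain
pairwise distinct. -/
theorem stmt14 (n d : ℕ) (hn : 0 < n) (hd : 0 < d)
    (A : Finset (Fin n → ℕ)) (hA : A.Nonempty)
    (hdeg : ∀ e ∈ A, ∀ i, e i ≤ d)
    (deg : (Fin n → ℕ) → ℕ)
    (hdegdef : ∀ e, deg e = ∑ i, e i * (d + 1) ^ (i : ℕ)) :
    (∀ e₁ ∈ A, ∀ e₂ ∈ A, deg e₁ = deg e₂ → e₁ = e₂) ∧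
    ∃ j < n * d * A.card ^ 2 * Nat.clog 2 (d + 1),
      (Nat.nth Nat.Prime j).Prime ∧
      ∀ e₁ ∈ A, ∀ e₂ ∈ A, e₁ ≠ e₂ →
        deg e₁ % Nat.nth Nat.Prime j ≠ deg e₂ % Nat.nth Nat.Prime j := by
  have hlt : ∀ e ∈ A, ∀ i, e i < d + 1 := fun e he i => Nat.lt_succ_of_le (hdeg e he i)
  have inj : ∀ e₁ ∈ A, ∀ e₂ ∈ A, deg e₁ = deg e₂ → e₁ = e₂ := by
    intro e₁ h₁ e₂ h₂ h
    exact kron_inj (d + 1) n e₁ e₂ (hlt e₁ h₁) (hlt e₂ h₂)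
      (by rwa [hdegdef, hdegdef] at h)
  refine ⟨inj, ?_⟩
  set a := A.card with hadef
  set c := Nat.clog 2 (d + 1) with hcdef
  set N := n * d * a ^ 2 * c with hNdef
  have hc : 0 < c := Nat.clog_pos one_lt_two (by omega)
  have ha : 0 < a := Finset.card_pos.mpr hA
  have hNpos : 0 < N := by positivity
  by_cases hcard : ∃ e₁ ∈ A, ∃ e₂ ∈ A, e₁ ≠ e₂
  case neg =>
    refine ⟨0, hNpos, Nat.prime_nth_prime 0, ?_⟩
    intro e₁ h₁ e₂ h₂ hne
    exact (hcard ⟨e₁, h₁, e₂, h₂, hne⟩).elim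
  case pos =>
    by_contra hbad
    push_neg at hbad
    -- setup
    have hBdeg : ∀ e ∈ A, deg e < (d + 1) ^ n := by
      intro e he
      rw [hdegdef]
      exact kron_lt (d + 1) n e (hlt e he)
    set s : Finset ((Fin n → ℕ) × (Fin n → ℕ)) :=
      (A ×ˢ A).filter (fun p => p.1 ≠ p.2) with hsdef
    set P : ℕ := ∏ p ∈ s, Nat.dist (deg p.1) (deg p.2) with hPdef
    have hmem : ∀ p ∈ s, p.1 ∈ A ∧ p.2 ∈ A ∧ p.1 ≠ p.2 := by
      intro p hp
      simp only [hsdef, Finset.mem_filter, Finset.mem_product] at hp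
      exact ⟨hp.1.1, hp.1.2, hp.2⟩
    have hfacpos : ∀ p ∈ s, 0 < Nat.dist (deg p.1) (deg p.2) := by
      intro p hp
      obtain ⟨h1, h2, hne⟩ := hmem p hp
      exact Nat.dist_pos_of_ne (fun h => hne (inj _ h1 _ h2 h))
    have hfaclt : ∀ p ∈ s, Nat.dist (deg p.1) (deg p.2) < (d + 1) ^ n := by
      intro p hp
      obtain ⟨h1, h2, _⟩ := hmem p hp
      have b1 := hBdeg _ h1
      have b2 := hBdeg _ h2
      rcases le_total (deg p.1) (deg p.2) with h | h
      · rw [Nat.dist_eq_sub_of_le h]; omega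
      · rw [Nat.dist_eq_sub_of_le_right h]; omega
    have hsne : s.Nonempty := by
      obtain ⟨e₁, h₁, e₂, h₂, hne⟩ := hcard
      exact ⟨(e₁, e₂), by simp [hsdef, Finset.mem_product, h₁, h₂, hne]⟩
    have hPpos : 0 < P := Finset.prod_pos hfacpos
    -- upper bound on P
    have hscard : s.card ≤ a ^ 2 := by
      calc s.card ≤ (A ×ˢ A).card := Finset.card_le_card (Finset.filter_subset _ _)
        _ = a ^ 2 := by rw [Finset.card_product, sq]
    have hPlt : P < ((d + 1) ^ n) ^ s.card := by
      calc P < ∏ _p ∈ s, (d + 1) ^ n :=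
          Finset.prod_lt_prod_of_nonempty hfacpos hfaclt hsne
        _ = ((d + 1) ^ n) ^ s.card := Finset.prod_const _
    have hb2 : d + 1 ≤ 2 ^ c := Nat.le_pow_clog one_lt_two _
    have hP2N : P < 2 ^ N := by
      have h1 : ((d + 1) ^ n) ^ s.card ≤ ((2 ^ c) ^ n) ^ s.card :=
        Nat.pow_le_pow_left (Nat.pow_le_pow_left hb2 n) _
      have h2 : ((2 ^ c) ^ n) ^ s.card = 2 ^ (c * n * s.card) := by
        rw [← pow_mul, ← pow_mul, mul_assoc]
      have h3 : c * n * s.card ≤ N := by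
        rw [hNdef]
        calc c * n * s.card ≤ c * n * (d * a ^ 2) := by
              refine Nat.mul_le_mul_left _ ?_
              calc s.card ≤ a ^ 2 := hscard
                _ ≤ d * a ^ 2 := Nat.le_mul_of_pos_left _ hd
          _ = n * d * a ^ 2 * c := by ring
      calc P < ((d + 1) ^ n) ^ s.card := hPlt
        _ ≤ 2 ^ (c * n * s.card) := h2 ▸ h1
        _ ≤ 2 ^ N := Nat.pow_le_pow_right (by norm_num) h3
    -- each of the first N primes divides P
    have hdvd : ∀ j < N, Nat.nth Nat.Prime j ∣ P := by
      intro j hj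
      obtain ⟨e₁, h₁, e₂, h₂, hne, hmod⟩ := hbad j hj (Nat.prime_nth_prime j)
      have hpair : (e₁, e₂) ∈ s := by
        simp [hsdef, Finset.mem_product, h₁, h₂, hne]
      have hdvdfac : Nat.nth Nat.Prime j ∣ Nat.dist (deg e₁) (deg e₂) := by
        rcases le_total (deg e₁) (deg e₂) with h | h
        · rw [Nat.dist_eq_sub_of_le h]
          exact (Nat.modEq_iff_dvd' h).mp hmod
        · rw [Nat.dist_eq_sub_of_le_right h]
          exact (Nat.modEq_iff_dvd' h).mp hmod.symm
      exact hdvdfac.trans (Finset.dvd_prod_of_mem _ hpair)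
    -- product of the first N primes divides P
    have hinj : Function.Injective (Nat.nth Nat.Prime) :=
      Nat.nth_injective Nat.infinite_setOf_prime
    set T : Finset ℕ := (Finset.range N).image (Nat.nth Nat.Prime) with hTdef
    have hTdvd : (∏ p ∈ T, p) ∣ P := by
      refine Finset.prod_primes_dvd P ?_ ?_
      · intro p hp
        simp only [hTdef, Finset.mem_image, Finset.mem_range] at hp
        obtain ⟨j, _, rfl⟩ := hp
        exact (Nat.prime_nth_prime j).prime
      · intro p hp
        simp only [hTdef, Finset.mem_image, Finset.mem_range] at hp
        obtain ⟨j, hj, rfl⟩ := hp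
        exact hdvd j hj
    have hTprod : (∏ p ∈ T, p) = ∏ j ∈ Finset.range N, Nat.nth Nat.Prime j := by
      rw [hTdef, Finset.prod_image (fun x _ y _ h => hinj h)]
    have h2N : 2 ^ N ≤ ∏ p ∈ T, p := by
      rw [hTprod]
      calc 2 ^ N = ∏ _j ∈ Finset.range N, 2 := by
            rw [Finset.prod_const, Finset.card_range]
        _ ≤ ∏ j ∈ Finset.range N, Nat.nth Nat.Prime j :=
            Finset.prod_le_prod' (fun j _ => (Nat.prime_nth_prime j).two_le)
    have : 2 ^ N ≤ P := h2N.trans (Nat.le_of_dvd hPpos hTdvd)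
    omega
end

section
/- Let $\P_1, \P_2$ be any two partitions of $[n]$. Then there exists a partition of $[n]$ into $m < 2\sqrt{n}$ base sets $B_1,\dots,B_m$ such that for each $i$, either every color of $\P_1$ restricted to $B_i$ is a single color (i.e., $B_i$ is contained in one color of $\P_1$), or every color of $\P_1$ restricted to $B_i$ is a singleton (i.e., $B_i$ meets each color of $\P_1$ in at most one element). -/
open Finset

section aux
variable {n : ℕ} (P₁ : Finpartition (Finset.univ : Finset (Fin n)))

/-- rank of x within its part -/
noncomputable def myrank (x : Fin n) : ℕ := ((P₁.part x).filter (· < x)).card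

lemma myrank_lt (x : Fin n) : myrank P₁ x < (P₁.part x).card := by
  apply Finset.card_lt_card
  constructor
  · exact Finset.filter_subset _ _
  · intro h
    have hx : x ∈ P₁.part x := P₁.mem_part (by simp)
    have := h hx
    simp at this

lemma myrank_inj {x y : Fin n} (hp : P₁.part x = P₁.part y)
    (hr : myrank P₁ x = myrank P₁ y) : x = y := by
  rcases lt_trichotomy x y with h | h | h
  · exfalso
    have : ((P₁.part x).filter (· < x)) ⊂ ((P₁.part y).filter (· < y)) := by
      rw [hp]
      constructor
      · intro z hz
        simp only [Finset.mem_filter] at hz ⊢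
        exact ⟨hz.1, lt_trans hz.2 h⟩
      · intro hc
        have hx : x ∈ (P₁.part y).filter (· < y) := by
          simp only [Finset.mem_filter]
          exact ⟨hp ▸ P₁.mem_part (by simp), h⟩
        have := hc hx
        simp at this
    exact absurd hr (Nat.ne_of_lt (Finset.card_lt_card this))
  · exact h
  · exfalso
    have : ((P₁.part y).filter (· < y)) ⊂ ((P₁.part x).filter (· < x)) := by
      rw [hp]
      constructor
      · intro z hz
        simp only [Finset.mem_filter] at hz ⊢
        exact ⟨hz.1, lt_trans hz.2 h⟩
      · intro hc
        have hy : y ∈ (P₁.part y).filter (· < x) := by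
          simp only [Finset.mem_filter]
          exact ⟨P₁.mem_part (by simp), h⟩
        have := hc hy
        simp at this
    exact absurd hr.symm (Nat.ne_of_lt (Finset.card_lt_card this))
end aux

/-- For any two partitions `P₁, P₂` of `[n]` there is a partition of `[n]`
into fewer than `2√n` base sets such that each base set is either contained in
a single color of `P₁`, or meets every color of `P₁` in at most one element. -/
theorem stmt15 (n : ℕ) (hn : 0 < n)
    (P₁ P₂ : Finpartition (Finset.univ : Finset (Fin n))) :
    ∃ B : Finpartition (Finset.univ : Finset (Fin n)),
      (B.parts.card : ℝ) < 2 * Real.sqrt n ∧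
      ∀ Bi ∈ B.parts,
        (∃ X ∈ P₁.parts, Bi ⊆ X) ∨ (∀ X ∈ P₁.parts, (X ∩ Bi).card ≤ 1) := by
  classical
  set s := Nat.sqrt n with hs
  set f : Fin n → Finset (Fin n) ⊕ ℕ :=
    fun x => if s < (P₁.part x).card then Sum.inl (P₁.part x) else Sum.inr (myrank P₁ x) with hf
  haveI : DecidableRel (Setoid.ker f).r := fun a b => inferInstanceAs (Decidable (f a = f b))
  refine ⟨Finpartition.ofSetoid (Setoid.ker f), ?_, ?_⟩
  · -- cardinality bound
    set bigparts := P₁.parts.filter (fun X => s < X.card) with hbig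
    have key : (Finpartition.ofSetoid (Setoid.ker f)).parts ⊆
        (Finset.univ.image f).image (fun v => Finset.univ.filter (fun b => f b = v)) := by
      intro Bi hBi
      simp only [Finpartition.ofSetoid, Finpartition.ofSetSetoid, Finset.mem_image] at hBi
      obtain ⟨a, -, ha⟩ := hBi
      refine Finset.mem_image.2 ⟨f a, Finset.mem_image_of_mem f (Finset.mem_univ a), ?_⟩
      rw [← ha]
      ext b
      simp [Setoid.ker_def, eq_comm]
    have hcard1 : (Finpartition.ofSetoid (Setoid.ker f)).parts.card ≤ bigparts.card + s := by
      refine le_trans (Finset.card_le_card key) ?_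
      refine le_trans (Finset.card_image_le) ?_
      have hsub : Finset.univ.image f ⊆
          bigparts.image Sum.inl ∪ (Finset.range s).image Sum.inr := by
        intro v hv
        simp only [Finset.mem_image, Finset.mem_univ, true_and] at hv
        obtain ⟨x, rfl⟩ := hv
        by_cases hx : s < (P₁.part x).card
        · refine Finset.mem_union_left _ ?_
          refine Finset.mem_image.2 ⟨P₁.part x, ?_, by simp [hf, hx]⟩
          exact Finset.mem_filter.2 ⟨P₁.part_mem.2 (by simp), hx⟩
        · refine Finset.mem_union_right _ ?_
          refine Finset.mem_image.2 ⟨myrank P₁ x, ?_, by simp [hf, hx]⟩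
          exact Finset.mem_range.2 (lt_of_lt_of_le (myrank_lt P₁ x) (not_lt.1 hx))
      calc (Finset.univ.image f).card ≤ _ := Finset.card_le_card hsub
        _ ≤ (bigparts.image Sum.inl).card + ((Finset.range s).image Sum.inr).card :=
          Finset.card_union_le _ _
        _ ≤ bigparts.card + s := by
          gcongr
          · exact Finset.card_image_le
          · exact le_trans Finset.card_image_le (by simp)
    -- bigparts.card * (s+1) ≤ n
    have hbn : bigparts.card * (s + 1) ≤ n := by
      have h1 : bigparts.card * (s + 1) ≤ ∑ X ∈ bigparts, X.card := by
        have := Finset.card_nsmul_le_sum bigparts _ (s+1)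
          (fun X hX => (Finset.mem_filter.1 hX).2)
        simpa [smul_eq_mul] using this
      have h2 : ∑ X ∈ bigparts, X.card ≤ ∑ X ∈ P₁.parts, X.card :=
        Finset.sum_le_sum_of_subset (Finset.filter_subset _ _)
      have h3 : ∑ X ∈ P₁.parts, X.card = n := by
        rw [P₁.sum_card_parts]; simp
      omega
    -- real arithmetic
    have hsqrt_pos : (0:ℝ) < Real.sqrt n := Real.sqrt_pos.2 (by positivity)
    have hs_le : (s:ℝ) ≤ Real.sqrt n := by
      rw [show (s:ℝ) = Real.sqrt ((s:ℝ)^2) from (Real.sqrt_sq (by positivity)).symm]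
      apply Real.sqrt_le_sqrt
      push_cast
      exact_mod_cast Nat.sqrt_le' n
    have hs1 : Real.sqrt n < (s:ℝ) + 1 := by
      nlinarith [Real.sq_sqrt (show (0:ℝ) ≤ n by positivity), Nat.lt_succ_sqrt' n,
        Real.sqrt_nonneg (n:ℝ), (show ((n:ℝ)) < ((s:ℝ)+1)^2 by exact_mod_cast Nat.lt_succ_sqrt' n)]
    have hb_lt : (bigparts.card : ℝ) < Real.sqrt n := by
      have h1 : (bigparts.card : ℝ) * ((s:ℝ) + 1) ≤ n := by exact_mod_cast hbn
      have h2 : (n:ℝ) = Real.sqrt n * Real.sqrt n := (Real.mul_self_sqrt (by positivity)).symm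
      nlinarith [hsqrt_pos]
    calc ((Finpartition.ofSetoid (Setoid.ker f)).parts.card : ℝ)
        ≤ (bigparts.card : ℝ) + s := by exact_mod_cast hcard1
      _ < Real.sqrt n + Real.sqrt n := by linarith
      _ = 2 * Real.sqrt n := by ring
  · -- each part good
    intro Bi hBi
    obtain ⟨x, hx⟩ := Finpartition.nonempty_of_mem_parts _ hBi
    have hBieq : Bi = (Finpartition.ofSetoid (Setoid.ker f)).part x :=
      ((Finpartition.ofSetoid (Setoid.ker f)).part_eq_of_mem hBi hx).symm
    have hmem : ∀ b, b ∈ Bi ↔ f x = f b := by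
      intro b
      rw [hBieq, Finpartition.mem_part_ofSetoid_iff_rel, Setoid.ker_def]
    by_cases hc : s < (P₁.part x).card
    · left
      refine ⟨P₁.part x, P₁.part_mem.2 (by simp), ?_⟩
      intro b hb
      have hfb := (hmem b).1 hb
      simp only [hf, hc, if_pos] at hfb
      by_cases hcb : s < (P₁.part b).card
      · simp only [hcb, if_pos] at hfb
        have : P₁.part x = P₁.part b := by injection hfb
        rw [this]
        exact P₁.mem_part (by simp)
      · simp only [hcb, if_neg, reduceIte] at hfb
        exact absurd hfb (by simp)
    · right
      intro X hX
      rw [Finset.card_le_one]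
      intro a ha b hb
      simp only [Finset.mem_inter] at ha hb
      have hfa := (hmem a).1 ha.2
      have hfb := (hmem b).1 hb.2
      simp only [hf, hc, if_neg, reduceIte] at hfa hfb
      have hpa : P₁.part a = X := P₁.part_eq_of_mem hX ha.1
      have hpb : P₁.part b = X := P₁.part_eq_of_mem hX hb.1
      by_cases hca : s < (P₁.part a).card
      · simp only [hca, if_pos] at hfa; exact absurd hfa (by simp)
      by_cases hcb : s < (P₁.part b).card
      · simp only [hcb, if_pos] at hfb; exact absurd hfb (by simp)
      simp only [hca, hcb, if_neg, reduceIte] at hfa hfb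
      have hra : myrank P₁ x = myrank P₁ a := by injection hfa
      have hrb : myrank P₁ x = myrank P₁ b := by injection hfb
      exact myrank_inj P₁ (hpa.trans hpb.symm) (hra ▸ hrb)
end

section
/- Let $f(c,n) := 2^{c-1} n^{1 - 1/2^{c-1}}$. For any $c \ge 2$ partitions $\P_1, \dots, \P_c$ of $[n]$, there exists a partition of $[n]$ into $m < f(c,n)$ base sets $B_1, \dots, B_m$ such that for each $i \in [m]$ there is a permutation $(\P_{i_1}, \dots, \P_{i_c})$ of the given partitions whose restriction to $B_i$ has distance 1. -/
open Finset Real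

section aux
variable {α κ : Type*} [DecidableEq α] [DecidableEq κ]

/-- Partition of a finset into the fibers of a function. -/
def kerPart (S : Finset α) (k : α → κ) : Finpartition S where
  parts := S.image (fun x => S.filter (fun y => k y = k x))
  supIndep := by
    rw [Finset.supIndep_iff_pairwiseDisjoint]
    rintro p hp q hq hpq
    simp only [Finset.coe_image, Set.mem_image, Finset.mem_coe] at hp hq
    obtain ⟨x, hx, rfl⟩ := hp
    obtain ⟨y, hy, rfl⟩ := hq
    simp only [Function.onFun, id]
    rw [Finset.disjoint_left]
    intro z hzx hzy
    simp only [Finset.mem_filter] at hzx hzy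
    exact hpq (by rw [← hzx.2, hzy.2])
  sup_parts := by
    apply le_antisymm
    · rw [Finset.sup_le_iff]
      intro p hp
      simp only [Finset.mem_image] at hp
      obtain ⟨x, hx, rfl⟩ := hp
      exact Finset.filter_subset _ _
    · intro x hx
      rw [Finset.mem_sup]
      exact ⟨S.filter (fun y => k y = k x), Finset.mem_image_of_mem _ hx,
        Finset.mem_filter.2 ⟨hx, rfl⟩⟩
  bot_notMem := by
    intro h
    simp only [Finset.bot_eq_empty, Finset.mem_image] at h
    obtain ⟨x, hx, hfe⟩ := h
    exact Finset.notMem_empty x (hfe ▸ Finset.mem_filter.2 ⟨hx, rfl⟩)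

lemma kerPart_parts_card_le (S : Finset α) (k : α → κ) :
    (kerPart S k).parts.card ≤ (S.image k).card := by
  have h : (kerPart S k).parts = (S.image k).image (fun v => S.filter (fun y => k y = v)) := by
    rw [Finset.image_image]
    rfl
  rw [h]
  exact Finset.card_image_le

lemma mem_kerPart_parts {S : Finset α} {k : α → κ} {b : Finset α} :
    b ∈ (kerPart S k).parts ↔ ∃ x ∈ S, b = S.filter (fun y => k y = k x) := by
  simp only [kerPart, Finset.mem_image]
  constructor
  · rintro ⟨x, hx, rfl⟩; exact ⟨x, hx, rfl⟩
  · rintro ⟨x, hx, rfl⟩; exact ⟨x, hx, rfl⟩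

end aux

lemma jensen_rpow {ι : Type*} (s : Finset ι) (t : ι → ℝ) (ht : ∀ i ∈ s, 0 ≤ t i)
    {a : ℝ} (ha0 : 0 ≤ a) (ha1 : a ≤ 1) :
    ∑ i ∈ s, t i ^ a ≤ (s.card : ℝ) ^ ((1:ℝ) - a) * (∑ i ∈ s, t i) ^ a := by
  rcases s.eq_empty_or_nonempty with rfl | hs
  · simp only [Finset.sum_empty, Finset.card_empty, Nat.cast_zero]
    positivity
  rcases eq_or_lt_of_le ha0 with rfl | ha0'
  · simp only [Real.rpow_zero, sub_zero]
    rw [Real.rpow_one]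
    simp [Finset.sum_const, nsmul_eq_mul]
  have hc : (0:ℝ) < s.card := by exact_mod_cast Finset.card_pos.2 hs
  have key := Real.arith_mean_le_rpow_mean s (fun _ => (s.card : ℝ)⁻¹)
      (fun i => t i ^ a) (fun i _ => by positivity) (by
        rw [Finset.sum_const, nsmul_eq_mul, mul_inv_cancel₀ (ne_of_gt hc)])
      (fun i hi => Real.rpow_nonneg (ht i hi) a) (p := 1 / a)
      (by rw [le_div_iff₀ ha0', one_mul]; exact ha1)
  have h1 : ∀ i ∈ s, (t i ^ a) ^ (1/a : ℝ) = t i := by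
    intro i hi
    rw [← Real.rpow_mul (ht i hi), mul_one_div, div_self (ne_of_gt ha0'), Real.rpow_one]
  have h2 : (1:ℝ) / (1 / a) = a := by field_simp
  have key : ∑ x ∈ s, ((s.card:ℝ))⁻¹ * t x ^ a ≤ (((s.card:ℝ))⁻¹ * ∑ x ∈ s, t x) ^ a := by
    refine key.trans_eq ?_
    rw [h2, ← Finset.mul_sum]
    congr 1
    congr 1
    exact Finset.sum_congr rfl (fun i hi => by rw [h1 i hi])
  rw [← Finset.mul_sum] at key
  have hsum : (0:ℝ) ≤ ∑ i ∈ s, t i := Finset.sum_nonneg ht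
  rw [Real.mul_rpow (by positivity) hsum] at key
  have := mul_le_mul_of_nonneg_left key (le_of_lt hc)
  calc ∑ i ∈ s, t i ^ a = (s.card : ℝ) * ((s.card:ℝ)⁻¹ * ∑ i ∈ s, t i ^ a) := by
        field_simp
    _ ≤ (s.card : ℝ) * (((s.card:ℝ)⁻¹) ^ a * (∑ i ∈ s, t i) ^ a) := this
    _ = (s.card : ℝ) ^ ((1:ℝ) - a) * (∑ i ∈ s, t i) ^ a := by
        rw [← mul_assoc]
        congr 1
        rw [Real.rpow_sub hc, Real.rpow_one, Real.inv_rpow (le_of_lt hc), div_eq_mul_inv]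

section main
variable {α β : Type*} [LinearOrder α] [DecidableEq α] [DecidableEq β]

/-- The key assigning to each element either its (large) color or its rank in a small color. -/
def bigKey (S : Finset α) (f : α → β) (x : α) : β ⊕ ℕ :=
  if S.card ≤ (S.filter (fun y => f y = f x)).card ^ 2 then Sum.inl (f x)
  else Sum.inr ((S.filter (fun y => f y = f x ∧ y < x)).card)

lemma bigKey_image_card_lt (S : Finset α) (hS : S.Nonempty) (f : α → β) :
    ((S.image (bigKey S f)).card : ℝ) < 2 * Real.sqrt S.card := by
  set n := S.card with hn
  have hn1 : 1 ≤ n := Finset.card_pos.2 hS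
  have hsqrtpos : (0:ℝ) < Real.sqrt n := Real.sqrt_pos.2 (by exact_mod_cast hn1)
  set T := S.image (bigKey S f) with hT
  rw [← Finset.card_toLeft_add_card_toRight (u := T)]
  have hA : (T.toLeft.card : ℝ) ≤ Real.sqrt n := by
    have hbig : ∀ v ∈ T.toLeft, Real.sqrt n ≤ ((S.filter (fun y => f y = v)).card : ℝ) := by
      intro v hv
      rw [Finset.mem_toLeft, hT, Finset.mem_image] at hv
      obtain ⟨x, hx, hk⟩ := hv
      by_cases hlarge : S.card ≤ (S.filter (fun y => f y = f x)).card ^ 2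
      · rw [bigKey, if_pos hlarge] at hk
        obtain rfl : f x = v := by injection hk
        have h0 : (n:ℝ) ≤ (((S.filter (fun y => f y = f x)).card : ℝ)) ^ 2 := by
          exact_mod_cast hlarge
        calc Real.sqrt n ≤ Real.sqrt ((((S.filter (fun y => f y = f x)).card : ℝ)) ^ 2) :=
              Real.sqrt_le_sqrt h0
          _ = _ := Real.sqrt_sq (by positivity)
      · rw [bigKey, if_neg hlarge] at hk
        exact absurd hk (by simp)
    have hdisj : ∀ v ∈ T.toLeft, ∀ w ∈ T.toLeft, v ≠ w →
        Disjoint (S.filter (fun y => f y = v)) (S.filter (fun y => f y = w)) := by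
      intro v _ w _ hvw
      rw [Finset.disjoint_left]
      intro z hz hz'
      rw [Finset.mem_filter] at hz hz'
      exact hvw (hz.2 ▸ hz'.2 ▸ rfl)
    have hsum : ∑ v ∈ T.toLeft, ((S.filter (fun y => f y = v)).card) ≤ n := by
      rw [← Finset.card_biUnion hdisj]
      exact Finset.card_le_card (Finset.biUnion_subset.2 fun v _ => Finset.filter_subset _ _)
    have h1 : (T.toLeft.card : ℝ) * Real.sqrt n ≤ (n : ℝ) := by
      calc (T.toLeft.card : ℝ) * Real.sqrt n = ∑ _v ∈ T.toLeft, Real.sqrt n := by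
            rw [Finset.sum_const, nsmul_eq_mul]
        _ ≤ ∑ v ∈ T.toLeft, ((S.filter (fun y => f y = v)).card : ℝ) :=
            Finset.sum_le_sum hbig
        _ ≤ (n : ℝ) := by exact_mod_cast hsum
    have hss : Real.sqrt n * Real.sqrt n = n := Real.mul_self_sqrt (by positivity)
    nlinarith [hsqrtpos]
  have hB : (T.toRight.card : ℝ) < Real.sqrt n := by
    have hsub : T.toRight ⊆ Finset.range (Nat.sqrt (n - 1)) := by
      intro r hr
      rw [Finset.mem_toRight, hT, Finset.mem_image] at hr
      obtain ⟨x, hx, hk⟩ := hr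
      by_cases hlarge : S.card ≤ (S.filter (fun y => f y = f x)).card ^ 2
      · rw [bigKey, if_pos hlarge] at hk
        exact absurd hk (by simp)
      rw [bigKey, if_neg hlarge] at hk
      obtain rfl : (S.filter (fun y => f y = f x ∧ y < x)).card = r := by injection hk
      push_neg at hlarge
      have hrlt : (S.filter (fun y => f y = f x ∧ y < x)).card <
          (S.filter (fun y => f y = f x)).card := by
        apply Finset.card_lt_card
        constructor
        · intro y hy
          rw [Finset.mem_filter] at hy ⊢
          exact ⟨hy.1, hy.2.1⟩
        · intro hsub'
          have hxin : x ∈ S.filter (fun y => f y = f x) := Finset.mem_filter.2 ⟨hx, rfl⟩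
          have := hsub' hxin
          rw [Finset.mem_filter] at this
          exact lt_irrefl x this.2.2
      rw [Finset.mem_range]
      have h2 : ((S.filter (fun y => f y = f x ∧ y < x)).card + 1) ^ 2 ≤ n - 1 := by
        have := Nat.succ_le_of_lt hrlt
        calc ((S.filter (fun y => f y = f x ∧ y < x)).card + 1) ^ 2
            ≤ (S.filter (fun y => f y = f x)).card ^ 2 := Nat.pow_le_pow_left this 2
          _ ≤ n - 1 := Nat.le_sub_one_of_lt hlarge
      have h5 : (S.filter (fun y => f y = f x ∧ y < x)).card + 1 ≤ Nat.sqrt (n-1) :=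
        Nat.le_sqrt'.2 h2
      omega
    calc (T.toRight.card : ℝ) ≤ ((Nat.sqrt (n-1) : ℕ) : ℝ) := by
          exact_mod_cast Finset.card_le_card hsub |>.trans (by rw [Finset.card_range])
      _ < Real.sqrt n := by
          rw [show ((Nat.sqrt (n-1) : ℕ) : ℝ) < Real.sqrt n ↔ _ from
            Real.lt_sqrt (by positivity)]
          have h3 : Nat.sqrt (n-1) ^ 2 ≤ n - 1 := Nat.sqrt_le' _
          have h4 : Nat.sqrt (n-1) ^ 2 < n := by omega
          exact_mod_cast h4
  push_cast
  linarith

lemma rk_lt_rk {S : Finset α} {f : α → β} {y z : α} (hy : y ∈ S) (hfz : f y = f z)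
    (hyz : y < z) :
    (S.filter (fun w => f w = f y ∧ w < y)).card <
      (S.filter (fun w => f w = f z ∧ w < z)).card := by
  apply Finset.card_lt_card
  constructor
  · intro w hw
    rw [Finset.mem_filter] at hw ⊢
    exact ⟨hw.1, hw.2.1.trans hfz, hw.2.2.trans hyz⟩
  · intro hsub
    have : y ∈ S.filter (fun w => f w = f z ∧ w < z) := Finset.mem_filter.2 ⟨hy, hfz, hyz⟩
    have := hsub this
    rw [Finset.mem_filter] at this
    exact lt_irrefl y this.2.2

lemma bigKey_part_cases (S : Finset α) (f : α → β) {b : Finset α}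
    (hb : b ∈ (kerPart S (bigKey S f)).parts) :
    (∀ y ∈ b, ∀ z ∈ b, f y = f z) ∨ (∀ y ∈ b, ∀ z ∈ b, f y = f z → y = z) := by
  rw [mem_kerPart_parts] at hb
  obtain ⟨x₀, hx₀, rfl⟩ := hb
  by_cases hl : S.card ≤ (S.filter (fun w => f w = f x₀)).card ^ 2
  · left
    have hval : ∀ y ∈ S.filter (fun y => bigKey S f y = bigKey S f x₀), f y = f x₀ := by
      intro y hy
      rw [Finset.mem_filter] at hy
      have hk := hy.2
      simp only [bigKey] at hk
      rw [if_pos hl] at hk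
      by_cases hly : S.card ≤ (S.filter (fun w => f w = f y)).card ^ 2
      · rw [if_pos hly] at hk
        injection hk
      · rw [if_neg hly] at hk
        exact absurd hk (by simp)
    intro y hy z hz
    rw [hval y hy, hval z hz]
  · right
    have hval : ∀ y ∈ S.filter (fun y => bigKey S f y = bigKey S f x₀),
        (S.filter (fun w => f w = f y ∧ w < y)).card =
          (S.filter (fun w => f w = f x₀ ∧ w < x₀)).card := by
      intro y hy
      rw [Finset.mem_filter] at hy
      have hk := hy.2
      simp only [bigKey] at hk
      rw [if_neg hl] at hk
      by_cases hly : S.card ≤ (S.filter (fun w => f w = f y)).card ^ 2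
      · rw [if_pos hly] at hk
        exact absurd hk (by simp)
      · rw [if_neg hly] at hk
        injection hk
    intro y hy z hz hfz
    have h1 := hval y hy
    have h2 := hval z hz
    have hyS : y ∈ S := (Finset.mem_filter.1 hy).1
    have hzS : z ∈ S := (Finset.mem_filter.1 hz).1
    by_contra hne
    rcases lt_trichotomy y z with hlt | heq | hgt
    · have := rk_lt_rk hyS hfz hlt
      omega
    · exact hne heq
    · have := rk_lt_rk hzS hfz.symm hgt
      omega

theorem core (m : ℕ) (S : Finset α) (hS : S.Nonempty) (g : Fin (m+1) → α → β) :
    ∃ D : Finpartition S,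
      ((D.parts.card : ℝ) ≤ 2^m * (S.card:ℝ) ^ ((1:ℝ) - 1/2^m)) ∧
      (1 ≤ m → (D.parts.card : ℝ) < 2^m * (S.card:ℝ) ^ ((1:ℝ) - 1/2^m)) ∧
      ∀ B ∈ D.parts, ∃ ρ : Fin (m+1) → ℕ, Function.Injective ρ ∧
        ∀ i j : Fin (m+1), ρ i < ρ j →
          ∀ x ∈ B, ∀ y ∈ B, g i x = g i y → g j x = g j y := by
  induction m generalizing S with
  | zero =>
    refine ⟨Finpartition.indiscrete (by
      simpa [Finset.bot_eq_empty] using hS.ne_empty), ?_, ?_, ?_⟩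
    · simp only [Finpartition.indiscrete_parts, Finset.card_singleton, Nat.cast_one]
      norm_num
    · intro h; omega
    · intro B _
      refine ⟨fun _ => 0, fun i j _ => Fin.ext (by omega), ?_⟩
      intro i j hij
      exact absurd hij (lt_irrefl 0)
  | succ m ih =>
    have hn1 : 1 ≤ S.card := Finset.card_pos.2 hS
    have hn0 : (0:ℝ) < S.card := by exact_mod_cast hn1
    set f0 := g 0 with hf0
    set P1 := kerPart S (bigKey S f0) with hP1
    have hM : ((P1.parts.card : ℝ)) < 2 * Real.sqrt S.card := by
      calc ((P1.parts.card : ℝ)) ≤ ((S.image (bigKey S f0)).card : ℝ) := by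
            exact_mod_cast kerPart_parts_card_le S (bigKey S f0)
        _ < 2 * Real.sqrt S.card := bigKey_image_card_lt S hS f0
    have hex : ∀ b ∈ P1.parts, ∃ D' : Finpartition b,
        ((D'.parts.card : ℝ) ≤ 2^m * (b.card:ℝ) ^ ((1:ℝ) - 1/2^m)) ∧
        (1 ≤ m → (D'.parts.card : ℝ) < 2^m * (b.card:ℝ) ^ ((1:ℝ) - 1/2^m)) ∧
        ∀ B ∈ D'.parts, ∃ ρ : Fin (m+1) → ℕ, Function.Injective ρ ∧
          ∀ i j : Fin (m+1), ρ i < ρ j →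
            ∀ x ∈ B, ∀ y ∈ B, g i.succ x = g i.succ y → g j.succ x = g j.succ y :=
      fun b hb => ih b (P1.nonempty_of_mem_parts hb) (fun i => g i.succ)
    choose Q hQ1 _hQ2 hQ3 using hex
    set a : ℝ := 1 - 1/2^m with ha
    have ha0 : 0 ≤ a := by
      rw [ha]
      have : (1:ℝ)/2^m ≤ 1 := by
        rw [div_le_one (by positivity)]
        exact one_le_pow₀ (by norm_num)
      linarith
    have ha1 : a ≤ 1 := by
      rw [ha]
      have : (0:ℝ) < 1/2^m := by positivity
      linarith
    have h1a : (1:ℝ) - a = 1/2^m := by rw [ha]; ring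
    -- the counting
    have hcount : ((P1.bind Q).parts.card : ℝ) < 2^(m+1) * (S.card:ℝ) ^ ((1:ℝ) - 1/2^(m+1)) := by
      have e0 : ((P1.bind Q).parts.card : ℝ) = ∑ A ∈ P1.parts.attach, ((Q A.1 A.2).parts.card : ℝ) := by
        rw [Finpartition.card_bind]
        push_cast
        rfl
      have e1 : ∑ A ∈ P1.parts.attach, ((Q A.1 A.2).parts.card : ℝ)
          ≤ 2^m * ∑ A ∈ P1.parts.attach, ((A.1.card : ℝ)) ^ a := by
        rw [Finset.mul_sum]
        exact Finset.sum_le_sum (fun A _ => hQ1 A.1 A.2)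
      have e2 : ∑ A ∈ P1.parts.attach, ((A.1.card : ℝ)) ^ a
          ≤ ((P1.parts.card : ℝ)) ^ ((1:ℝ) - a) * ((S.card : ℝ)) ^ a := by
        have hje := jensen_rpow P1.parts.attach (fun A => ((A.1.card : ℝ)))
          (fun A _ => by positivity) ha0 ha1
        rw [Finset.card_attach] at hje
        have hsc : ∑ A ∈ P1.parts.attach, ((A.1.card : ℝ)) = (S.card : ℝ) := by
          rw [Finset.sum_attach P1.parts (fun b => ((b.card : ℝ)))]
          exact_mod_cast P1.sum_card_parts
        rw [hsc] at hje
        exact hje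
      have e3 : ((P1.parts.card : ℝ)) ^ ((1:ℝ) - a) < (2 * Real.sqrt S.card) ^ ((1:ℝ) - a) := by
        apply Real.rpow_lt_rpow (by positivity) hM
        rw [h1a]; positivity
      have hpowpos : (0:ℝ) < ((S.card : ℝ)) ^ a := Real.rpow_pos_of_pos hn0 a
      have e4 : (2 * Real.sqrt S.card) ^ ((1:ℝ) - a) * ((S.card : ℝ)) ^ a
          = 2 ^ ((1:ℝ)/2^m) * (S.card : ℝ) ^ ((1:ℝ) - 1/2^(m+1)) := by
        rw [Real.mul_rpow (by norm_num) (Real.sqrt_nonneg _), Real.sqrt_eq_rpow,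
          ← Real.rpow_mul (le_of_lt hn0), h1a, mul_assoc,
          ← Real.rpow_add hn0]
        congr 2
        rw [ha, pow_succ]
        field_simp
        ring
      have e5 : (2:ℝ) ^ ((1:ℝ)/2^m) ≤ 2 := by
        calc (2:ℝ) ^ ((1:ℝ)/2^m) ≤ 2 ^ (1:ℝ) := by
              apply Real.rpow_le_rpow_of_exponent_le (by norm_num)
              rw [div_le_one (by positivity)]
              exact one_le_pow₀ (by norm_num)
          _ = 2 := Real.rpow_one 2
      calc ((P1.bind Q).parts.card : ℝ)
          ≤ 2^m * (((P1.parts.card : ℝ)) ^ ((1:ℝ) - a) * ((S.card : ℝ)) ^ a) := by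
            rw [e0]
            refine e1.trans ?_
            exact mul_le_mul_of_nonneg_left (e2.trans (le_refl _)) (by positivity)
        _ < 2^m * ((2 * Real.sqrt S.card) ^ ((1:ℝ) - a) * ((S.card : ℝ)) ^ a) := by
            apply mul_lt_mul_of_pos_left _ (by positivity : (0:ℝ) < 2^m)
            exact mul_lt_mul_of_pos_right e3 hpowpos
        _ = 2^m * (2 ^ ((1:ℝ)/2^m) * (S.card : ℝ) ^ ((1:ℝ) - 1/2^(m+1))) := by rw [e4]
        _ ≤ 2^(m+1) * (S.card:ℝ) ^ ((1:ℝ) - 1/2^(m+1)) := by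
            rw [pow_succ, mul_assoc]
            apply mul_le_mul_of_nonneg_left _ (by positivity : (0:ℝ) ≤ 2^m)
            apply mul_le_mul_of_nonneg_right e5
            positivity
    refine ⟨P1.bind Q, le_of_lt hcount, fun _ => hcount, ?_⟩
    -- the chain property
    intro B hB
    rw [Finpartition.mem_bind] at hB
    obtain ⟨A, hA, hBA⟩ := hB
    obtain ⟨ρ', hρinj, hρchain⟩ := hQ3 A hA B hBA
    have hBsub : B ⊆ A := (Q A hA).le hBA
    rcases bigKey_part_cases S f0 hA with hconst | hinj
    · -- f0 is constant on A : put it last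
      have hlt : ∀ i : Fin (m+1), ρ' i < (Finset.univ.sup ρ') + 1 :=
        fun i => Nat.lt_succ_of_le (Finset.le_sup (Finset.mem_univ i))
      refine ⟨Fin.cons ((Finset.univ.sup ρ') + 1) ρ', ?_, ?_⟩
      · intro i j hij
        rcases Fin.eq_zero_or_eq_succ i with rfl | ⟨i', rfl⟩ <;>
          rcases Fin.eq_zero_or_eq_succ j with rfl | ⟨j', rfl⟩
        · rfl
        · simp only [Fin.cons_zero, Fin.cons_succ] at hij
          exact absurd hij.symm (Nat.ne_of_lt (hlt j'))
        · simp only [Fin.cons_zero, Fin.cons_succ] at hij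
          exact absurd hij (Nat.ne_of_lt (hlt i'))
        · simp only [Fin.cons_succ] at hij
          rw [hρinj hij]
      · intro i j hij x hx y hy hgi
        rcases Fin.eq_zero_or_eq_succ j with rfl | ⟨j', rfl⟩
        · exact hconst x (hBsub hx) y (hBsub hy)
        rcases Fin.eq_zero_or_eq_succ i with rfl | ⟨i', rfl⟩
        · simp only [Fin.cons_zero, Fin.cons_succ] at hij
          exact absurd hij (by have := hlt j'; omega)
        · simp only [Fin.cons_succ] at hij
          exact hρchain i' j' hij x hx y hy hgi
    · -- f0 is injective on A : put it first
      refine ⟨Fin.cons 0 (fun i => ρ' i + 1), ?_, ?_⟩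
      · intro i j hij
        rcases Fin.eq_zero_or_eq_succ i with rfl | ⟨i', rfl⟩ <;>
          rcases Fin.eq_zero_or_eq_succ j with rfl | ⟨j', rfl⟩
        · rfl
        · simp only [Fin.cons_zero, Fin.cons_succ] at hij
          omega
        · simp only [Fin.cons_zero, Fin.cons_succ] at hij
          omega
        · simp only [Fin.cons_succ] at hij
          rw [hρinj (by omega : ρ' i' = ρ' j')]
      · intro i j hij x hx y hy hgi
        rcases Fin.eq_zero_or_eq_succ j with rfl | ⟨j', rfl⟩
        · simp only [Fin.cons_zero] at hij
          exact absurd hij (Nat.not_lt_zero _)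
        rcases Fin.eq_zero_or_eq_succ i with rfl | ⟨i', rfl⟩
        · have hxy : x = y := hinj x (hBsub hx) y (hBsub hy) hgi
          rw [hxy]
        · simp only [Fin.cons_succ] at hij
          exact hρchain i' j' (by omega) x hx y hy hgi

end main



/-- The restriction to `B` of the partition sequence `Q` has distance 1: for
every later partition in the sequence, each of its colors (restricted to `B`)
is a union of colors of every earlier partition (restricted to `B`). -/
def RestrictedDistOne {n : ℕ} (B : Finset (Fin n))
    (Q : List (Finpartition (Finset.univ : Finset (Fin n)))) : Prop :=
  ∀ (i j : Fin Q.length), (j : ℕ) < (i : ℕ) →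
    ∀ Y ∈ (Q.get i).parts, ∀ X ∈ (Q.get j).parts,
      ((X ∩ B) ∩ (Y ∩ B)).Nonempty → X ∩ B ⊆ Y ∩ B

/-- For any `c ≥ 2` partitions of `[n]` there is a partition of `[n]` into
fewer than `2^{c-1} n^{1-1/2^{c-1}}` base sets such that on each base set some
permutation of the given partitions has distance 1. -/
theorem stmt16 (n c : ℕ) (hn : 0 < n) (hc : 2 ≤ c)
    (P : Fin c → Finpartition (Finset.univ : Finset (Fin n))) :
    ∃ B : Finpartition (Finset.univ : Finset (Fin n)),
      (B.parts.card : ℝ) < 2 ^ (c - 1) * (n : ℝ) ^ ((1 : ℝ) - 1 / 2 ^ (c - 1)) ∧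
      ∀ Bi ∈ B.parts, ∃ σ : Equiv.Perm (Fin c),
        RestrictedDistOne Bi ((List.finRange c).map (fun j => P (σ j))) := by
  obtain ⟨m, rfl⟩ : ∃ m, c = m + 1 := ⟨c - 1, by omega⟩
  have hm : 1 ≤ m := by omega
  have : Nonempty (Fin n) := ⟨⟨0, hn⟩⟩
  obtain ⟨D, _, hlt, hchain⟩ := core m (Finset.univ : Finset (Fin n)) Finset.univ_nonempty
    (fun i x => (P i).part x)
  refine ⟨D, ?_, ?_⟩
  · have h := hlt hm
    simpa [Finset.card_univ, Fintype.card_fin, Nat.add_sub_cancel] using h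
  · intro Bi hBi
    obtain ⟨ρ, hρinj, hρchain⟩ := hchain Bi hBi
    refine ⟨Tuple.sort ρ, ?_⟩
    set σ := Tuple.sort ρ with hσ
    set Q := (List.finRange (m+1)).map (fun j => P (σ j)) with hQ
    have hlen : Q.length = m + 1 := by simp [hQ]
    have hget : ∀ t : Fin Q.length, Q.get t = P (σ (Fin.cast hlen t)) := by
      intro t
      simp only [hQ, List.get_eq_getElem, List.getElem_map, List.getElem_finRange]
      rfl
    intro i j hji Y hY X hX hne
    set i' : Fin (m+1) := Fin.cast hlen i with hi'
    set j' : Fin (m+1) := Fin.cast hlen j with hj'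
    rw [hget i] at hY
    rw [hget j] at hX
    obtain ⟨z, hz⟩ := hne
    rw [Finset.mem_inter, Finset.mem_inter, Finset.mem_inter] at hz
    have hmono : ρ (σ j') ≤ ρ (σ i') :=
      Tuple.monotone_sort ρ (show j' ≤ i' by
        rw [Fin.le_def]
        exact le_of_lt hji)
    have hne' : σ j' ≠ σ i' := by
      intro h
      have h2 := σ.injective h
      have hvv := congrArg Fin.val h2
      simp [hj', hi'] at hvv
      omega
    have hltρ : ρ (σ j') < ρ (σ i') := lt_of_le_of_ne hmono (fun h => hne' (hρinj h))
    intro x hx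
    rw [Finset.mem_inter] at hx ⊢
    have h1 : (P (σ j')).part x = X := Finpartition.part_eq_of_mem _ hX hx.1
    have h2 : (P (σ j')).part z = X := Finpartition.part_eq_of_mem _ hX hz.1.1
    have h3 := hρchain (σ j') (σ i') hltρ x hx.2 z hz.1.2 (by rw [h1, h2])
    have h4 : (P (σ i')).part z = Y := Finpartition.part_eq_of_mem _ hY hz.2.1
    have h5 : x ∈ (P (σ i')).part x := Finpartition.mem_part _ (Finset.mem_univ x)
    rw [h3, h4] at h5
    exact ⟨h5, hx.2⟩
end

section
/- Let $D(\bar x) = \prod_{i=1}^d D_i(\bar x_i)$ be a product of polynomials over disjoint variable sets with coefficients in the matrix algebra $\mathbb{F}^{w\times w}$, where each constant term $D_{i\mathbf{0}}$ is invertible. Suppose the coefficient $D_e = \prod_i D_{ie_i}$ is an $\mathbb{F}$-linear combination of its descendants $\{D_f : \mathrm{bS}(f) \subset \mathrm{bS}(e)\}$, and let $D_{e^*}$ be a parent of $D_e$ obtained by replacing, at some index $j$ with $j > \max \mathrm{bS}(e)$ or $j < \min \mathrm{bS}(e)$, the constant factor $D_{j\mathbf{0}}$ by $D_{j e^*_j}$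 with $e^*_j \ne \mathbf{0}$. Then $D_{e^*}$ is an $\mathbb{F}$-linear combination of its own descendants $\{D_g : \mathrm{bS}(g) \subset \mathrm{bS}(e^*)\}$. -/
private lemma listprod_isUnit' {M : Type*} [Monoid M] :
    ∀ l : List M, (∀ x ∈ l, IsUnit x) → IsUnit l.prod := by
  intro l
  induction l with
  | nil => simp
  | cons a t ih =>
    intro h
    simp only [List.prod_cons]
    exact (h a (by simp)).mul (ih fun x hx => h x (by simp [hx]))

private lemma mem_take_finRange' {d k : ℕ} (i : Fin d) :
    i ∈ (List.finRange d).take k ↔ (i : ℕ) < k := by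
  simp only [List.mem_take_iff_getElem, List.getElem_finRange, List.length_take,
    List.length_finRange]
  constructor
  · rintro ⟨m, h, rfl⟩
    simp only [Fin.cast, Fin.val_mk]
    omega
  · intro h
    refine ⟨(i : ℕ), by omega, ?_⟩
    ext; simp

private lemma mem_drop_finRange' {d k : ℕ} (i : Fin d) :
    i ∈ (List.finRange d).drop k ↔ k ≤ (i : ℕ) := by
  simp only [List.mem_drop_iff_getElem, List.getElem_finRange, List.length_drop,
    List.length_finRange]
  constructor
  · rintro ⟨m, h, rfl⟩
    simp only [Fin.cast, Fin.val_mk]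
    omega
  · intro h
    refine ⟨(i : ℕ) - k, by omega, ?_⟩
    ext; simp; omega

private lemma insert_ssubset_insert' {α : Type*} [DecidableEq α] {A B : Finset α} {j : α}
    (hAB : A ⊂ B) (hjB : j ∉ B) : insert j A ⊂ insert j B := by
  obtain ⟨x, hxB, hxA⟩ := Finset.exists_of_ssubset hAB
  refine Finset.ssubset_iff_of_subset (Finset.insert_subset_insert _ hAB.subset) |>.mpr ?_
  refine ⟨x, Finset.mem_insert_of_mem hxB, ?_⟩
  intro hx
  rcases Finset.mem_insert.mp hx with rfl | hx
  · exact hjB hxB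
  · exact hxA hx

/-- Lifting a dependence from a child to its parent: with disjoint variable
blocks and invertible constant terms `Dᵢ(0)`, if the coefficient
`D_e = ∏ᵢ Dᵢ(eᵢ)` is a linear combination of its descendants
(coefficients with strictly smaller block support), and `e*` is a parent of
`e` obtained by replacing the constant factor at an index `j` lying entirely
to the right (or entirely to the left) of the block support of `e` by a
nonconstant term, then `D_{e*}` is a linear combination of its own
descendants. -/
theorem stmt19 {F : Type*} [Field F] (w d : ℕ) (n : Fin d → ℕ)
    (Di : ∀ i : Fin d, ((Fin (n i)) →₀ ℕ) → Matrix (Fin w) (Fin w) F)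
    (hinv : ∀ i, IsUnit (Di i 0))
    (e estar : ∀ i : Fin d, (Fin (n i)) →₀ ℕ)
    (j : Fin d) (hj : estar j ≠ 0) (hje : e j = 0)
    (hagree : ∀ i, i ≠ j → estar i = e i)
    (hside : (∀ i, e i ≠ 0 → i < j) ∨ (∀ i, e i ≠ 0 → j < i))
    (hdep : (((List.finRange d).map (fun i => Di i (e i))).prod) ∈
      Submodule.span F {v : Matrix (Fin w) (Fin w) F |
        ∃ f : ∀ i : Fin d, (Fin (n i)) →₀ ℕ,
          (Finset.univ.filter (fun i => f i ≠ 0)) ⊂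
            (Finset.univ.filter (fun i => e i ≠ 0)) ∧
          v = ((List.finRange d).map (fun i => Di i (f i))).prod}) :
    (((List.finRange d).map (fun i => Di i (estar i))).prod) ∈
      Submodule.span F {v : Matrix (Fin w) (Fin w) F |
        ∃ g : ∀ i : Fin d, (Fin (n i)) →₀ ℕ,
          (Finset.univ.filter (fun i => g i ≠ 0)) ⊂
            (Finset.univ.filter (fun i => estar i ≠ 0)) ∧
          v = ((List.finRange d).map (fun i => Di i (g i))).prod} := by
  classical
  set L := List.finRange d with hL
  set z : ∀ i : Fin d, (Fin (n i)) →₀ ℕ := fun _ => 0 with hz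
  have hestar : estar = Function.update e j (estar j) := by
    funext i
    by_cases hij : i = j
    · subst hij; simp
    · simp [Function.update_of_ne hij, hagree i hij]
  -- the support identity: support of the update is `insert j` of the support
  have hfilter : ∀ f : (∀ i : Fin d, (Fin (n i)) →₀ ℕ), f j = 0 →
      (Finset.univ.filter (fun i => Function.update f j (estar j) i ≠ 0)) =
        insert j (Finset.univ.filter (fun i => f i ≠ 0)) := by
    intro f hfj
    ext i
    by_cases hij : i = j
    · subst hij; simp [hj]
    · simp [Function.update_of_ne hij, hij]
  have hfilter_estar :
      (Finset.univ.filter (fun i => estar i ≠ 0)) =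
        insert j (Finset.univ.filter (fun i => e i ≠ 0)) := by
    rw [hestar]; exact hfilter e hje
  have hjnotin : j ∉ Finset.univ.filter (fun i => e i ≠ 0) := by simp [hje]
  rcases hside with hright | hleft
  · -- support of e is to the left of j : multiply on the right
    have he0 : ∀ i : Fin d, (j : ℕ) ≤ (i : ℕ) → e i = 0 := by
      intro i hi
      by_contra h
      refine absurd (hright i h) fun hc => ?_
      rw [Fin.lt_def] at hc; omega
    set A : Matrix (Fin w) (Fin w) F :=
      ((L.drop (j : ℕ)).map (fun i => Di i 0)).prod with hA
    have hAu : IsUnit A := by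
      apply listprod_isUnit'
      intro x hx
      simp only [List.mem_map] at hx
      obtain ⟨i, _, rfl⟩ := hx
      exact hinv i
    set B : Matrix (Fin w) (Fin w) F :=
      ((L.drop (j : ℕ)).map (fun i => Di i (Function.update z j (estar j) i))).prod with hB
    set M : Matrix (Fin w) (Fin w) F := (↑hAu.unit⁻¹ : Matrix (Fin w) (Fin w) F) * B with hM
    -- key identity
    have key : ∀ f : (∀ i : Fin d, (Fin (n i)) →₀ ℕ),
        (∀ i : Fin d, (j : ℕ) ≤ (i : ℕ) → f i = 0) →
        ((L.map (fun i => Di i (Function.update f j (estar j) i))).prod) =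
          ((L.map (fun i => Di i (f i))).prod) * M := by
      intro f hf0
      have hsplit : ∀ c : Fin d → Matrix (Fin w) (Fin w) F,
          (L.map c).prod = ((L.take (j : ℕ)).map c).prod * ((L.drop (j : ℕ)).map c).prod := by
        intro c
        rw [List.map_take, List.map_drop, List.prod_take_mul_prod_drop]
      rw [hsplit, hsplit]
      have hP : ((L.take (j : ℕ)).map (fun i => Di i (Function.update f j (estar j) i))).prod =
          ((L.take (j : ℕ)).map (fun i => Di i (f i))).prod := by
        congr 1
        apply List.map_congr_left
        intro i hi
        have : (i : ℕ) < (j : ℕ) := (mem_take_finRange' i).mp hi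
        have hij : i ≠ j := by intro h; subst h; omega
        rw [Function.update_of_ne hij]
      have hQf : ((L.drop (j : ℕ)).map (fun i => Di i (f i))).prod = A := by
        rw [hA]
        congr 1
        apply List.map_congr_left
        intro i hi
        rw [hf0 i ((mem_drop_finRange' i).mp hi)]
      have hQg : ((L.drop (j : ℕ)).map (fun i => Di i (Function.update f j (estar j) i))).prod
          = B := by
        rw [hB]
        congr 1
        apply List.map_congr_left
        intro i hi
        by_cases hij : i = j
        · subst hij; simp only [Function.update_self]
        · rw [Function.update_of_ne hij, Function.update_of_ne hij,
            hf0 i ((mem_drop_finRange' i).mp hi)]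
      rw [hP, hQf, hQg, hM, ← mul_assoc, mul_assoc _ A, hAu.mul_val_inv, mul_one]
    -- lift the dependence
    have hgoal_eq : ((L.map (fun i => Di i (estar i))).prod) =
        ((L.map (fun i => Di i (e i))).prod) * M := by
      conv_lhs => rw [hestar]
      exact key e he0
    rw [hgoal_eq]
    have hmap := Submodule.mem_map_of_mem (f := LinearMap.mulRight F M) hdep
    rw [Submodule.map_span] at hmap
    simp only [LinearMap.mulRight_apply] at hmap
    refine Submodule.span_mono ?_ hmap
    rintro v ⟨x, ⟨f, hfsub, rfl⟩, rfl⟩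
    simp only [LinearMap.mulRight_apply]
    have hfe : ∀ i, f i ≠ 0 → e i ≠ 0 := by
      intro i hfi
      have := hfsub.subset (Finset.mem_filter.mpr ⟨Finset.mem_univ i, hfi⟩)
      exact (Finset.mem_filter.mp this).2
    have hf0 : ∀ i : Fin d, (j : ℕ) ≤ (i : ℕ) → f i = 0 := by
      intro i hi
      by_contra h
      exact absurd (he0 i hi) (hfe i h)
    refine ⟨Function.update f j (estar j), ?_, (key f hf0).symm⟩
    rw [hfilter f (hf0 j le_rfl), hfilter_estar]
    exact insert_ssubset_insert' hfsub hjnotin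
  · -- support of e is to the right of j : multiply on the left
    have he0 : ∀ i : Fin d, (i : ℕ) ≤ (j : ℕ) → e i = 0 := by
      intro i hi
      by_contra h
      refine absurd (hleft i h) fun hc => ?_
      rw [Fin.lt_def] at hc; omega
    set A : Matrix (Fin w) (Fin w) F :=
      ((L.take ((j : ℕ) + 1)).map (fun i => Di i 0)).prod with hA
    have hAu : IsUnit A := by
      apply listprod_isUnit'
      intro x hx
      simp only [List.mem_map] at hx
      obtain ⟨i, _, rfl⟩ := hx
      exact hinv i
    set B : Matrix (Fin w) (Fin w) F :=
      ((L.take ((j : ℕ) + 1)).map (fun i => Di i (Function.update z j (estar j) i))).prod with hB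
    set M : Matrix (Fin w) (Fin w) F := B * (↑hAu.unit⁻¹ : Matrix (Fin w) (Fin w) F) with hM
    have key : ∀ f : (∀ i : Fin d, (Fin (n i)) →₀ ℕ),
        (∀ i : Fin d, (i : ℕ) ≤ (j : ℕ) → f i = 0) →
        ((L.map (fun i => Di i (Function.update f j (estar j) i))).prod) =
          M * ((L.map (fun i => Di i (f i))).prod) := by
      intro f hf0
      have hsplit : ∀ c : Fin d → Matrix (Fin w) (Fin w) F,
          (L.map c).prod = ((L.take ((j : ℕ) + 1)).map c).prod *
            ((L.drop ((j : ℕ) + 1)).map c).prod := by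
        intro c
        rw [List.map_take, List.map_drop, List.prod_take_mul_prod_drop]
      rw [hsplit, hsplit]
      have hP : ((L.drop ((j : ℕ) + 1)).map (fun i => Di i (Function.update f j (estar j) i))).prod =
          ((L.drop ((j : ℕ) + 1)).map (fun i => Di i (f i))).prod := by
        congr 1
        apply List.map_congr_left
        intro i hi
        have : (j : ℕ) + 1 ≤ (i : ℕ) := (mem_drop_finRange' i).mp hi
        have hij : i ≠ j := by intro h; subst h; omega
        rw [Function.update_of_ne hij]
      have hQf : ((L.take ((j : ℕ) + 1)).map (fun i => Di i (f i))).prod = A := by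
        rw [hA]
        congr 1
        apply List.map_congr_left
        intro i hi
        rw [hf0 i (by have := (mem_take_finRange' i).mp hi; omega)]
      have hQg : ((L.take ((j : ℕ) + 1)).map
          (fun i => Di i (Function.update f j (estar j) i))).prod = B := by
        rw [hB]
        congr 1
        apply List.map_congr_left
        intro i hi
        by_cases hij : i = j
        · subst hij; simp only [Function.update_self]
        · rw [Function.update_of_ne hij, Function.update_of_ne hij,
            hf0 i (by have := (mem_take_finRange' i).mp hi; omega)]
      rw [hP, hQf, hQg, hM, mul_assoc, ← mul_assoc _ A, hAu.val_inv_mul, one_mul]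
    have hgoal_eq : ((L.map (fun i => Di i (estar i))).prod) =
        M * ((L.map (fun i => Di i (e i))).prod) := by
      conv_lhs => rw [hestar]
      exact key e he0
    rw [hgoal_eq]
    have hmap := Submodule.mem_map_of_mem (f := LinearMap.mulLeft F M) hdep
    rw [Submodule.map_span] at hmap
    simp only [LinearMap.mulLeft_apply] at hmap
    refine Submodule.span_mono ?_ hmap
    rintro v ⟨x, ⟨f, hfsub, rfl⟩, rfl⟩
    simp only [LinearMap.mulLeft_apply]
    have hfe : ∀ i, f i ≠ 0 → e i ≠ 0 := by
      intro i hfi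
      have := hfsub.subset (Finset.mem_filter.mpr ⟨Finset.mem_univ i, hfi⟩)
      exact (Finset.mem_filter.mp this).2
    have hf0 : ∀ i : Fin d, (i : ℕ) ≤ (j : ℕ) → f i = 0 := by
      intro i hi
      by_contra h
      exact absurd (he0 i hi) (hfe i h)
    refine ⟨Function.update f j (estar j), ?_, (key f hf0).symm⟩
    rw [hfilter f (hf0 j le_rfl), hfilter_estar]
    exact insert_ssubset_insert' hfsub hjnotin
end
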